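/- Let X be a finite graph with vertex set Ω, π a correct partition of X, and e = e_{WL(X)_π} the twin parabolic of WL(X)_π. Then e is a twin equivalence of the graph X, the quotient coherent configuration WL(X)_π / e equals WL(X/e)_{π/e}, and π/e is a correct partition of the quotient graph X/e. -/

import Mathlib

open Set

universe u v

variable {Ω : Type*}

/-- The diagonal relation `1_Δ` of a set `Δ ⊆ Ω`. -/
def diagRel (Δ : Set Ω) : Set (Ω × Ω) := {p | p.1 = p.2 ∧ p.1 ∈ Δ}

/-- The number of points `γ` with `(p.1, γ) ∈ r` and `(γ, p.2) ∈ s`. -/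
noncomputable def interNum (r s : Set (Ω × Ω)) (p : Ω × Ω) : ℕ :=
  {γ : Ω | (p.1, γ) ∈ r ∧ (γ, p.2) ∈ s}.ncard

/-- A coherent configuration on `Ω`: a partition `S` of `Ω × Ω` such that the diagonal
is a union of classes, `S` is closed under transposition, and the intersection numbers
are well defined. -/
structure CoherentConfiguration (Ω : Type u) where
  S : Set (Set (Ω × Ω))
  isPartition : Setoid.IsPartition S
  diag_isRelation : ∃ T ⊆ S, ⋃₀ T = diagRel (Set.univ : Set Ω)
  swap_mem : ∀ s ∈ S, {p : Ω × Ω | (p.2, p.1) ∈ s} ∈ S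
  coherent : ∀ r ∈ S, ∀ s ∈ S, ∀ t ∈ S, ∀ p ∈ t, ∀ q ∈ t,
    interNum r s p = interNum r s q

namespace CoherentConfiguration

/-- A relation of `X` is a union of basis relations of `X`. -/
def IsRelation (X : CoherentConfiguration Ω) (r : Set (Ω × Ω)) : Prop :=
  ∃ T ⊆ X.S, ⋃₀ T = r

/-- A fiber of `X` is a set `Δ` with `1_Δ` a basis relation. -/
def IsFiber (X : CoherentConfiguration Ω) (Δ : Set Ω) : Prop :=
  diagRel Δ ∈ X.S

end CoherentConfiguration

/-- `X ≤ Y` iff every relation of `X` is a relation of `Y`. -/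
def CCle (X Y : CoherentConfiguration Ω) : Prop :=
  ∀ r, X.IsRelation r → Y.IsRelation r

/-- The arc set of a graph, as a set of ordered pairs. -/
def adjRel (G : SimpleGraph Ω) : Set (Ω × Ω) := {p | G.Adj p.1 p.2}

/-- `X = WL(G)`: the smallest coherent configuration having the arc set of `G`
among its relations. -/
def IsWL (G : SimpleGraph Ω) (X : CoherentConfiguration Ω) : Prop :=
  X.IsRelation (adjRel G) ∧
    ∀ Y : CoherentConfiguration Ω, Y.IsRelation (adjRel G) → CCle X Y

/-- `X = WL(G)_π`: the smallest coherent configuration having the arc set of `G`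
and every `1_Δ`, `Δ ∈ π`, among its relations. -/
def IsWLPart (G : SimpleGraph Ω) (π : Set (Set Ω)) (X : CoherentConfiguration Ω) : Prop :=
  X.IsRelation (adjRel G) ∧ (∀ Δ ∈ π, X.IsRelation (diagRel Δ)) ∧
    ∀ Y : CoherentConfiguration Ω, Y.IsRelation (adjRel G) →
      (∀ Δ ∈ π, Y.IsRelation (diagRel Δ)) → CCle X Y

/-- A graph is distance-hereditary if in every connected induced subgraph the distance
function is the same as in the graph itself. -/
def DistanceHereditary {V : Type*} (G : SimpleGraph V) : Prop :=
  ∀ s : Set V, (G.induce s).Connected →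
    ∀ u v : s, (G.induce s).dist u v = G.dist u.1 v.1

/-- Two vertices are twins in a graph if every other vertex is adjacent to both
or to neither. -/
def IsTwin (G : SimpleGraph Ω) (a b : Ω) : Prop :=
  ∀ γ, γ ≠ a → γ ≠ b → (G.Adj γ a ↔ G.Adj γ b)

/-- Two points are `X`-twins if for every other point `γ`, the basis relation containing
`(γ, a)` coincides with the one containing `(γ, b)`. -/
def XTwin (X : CoherentConfiguration Ω) (a b : Ω) : Prop :=
  ∀ γ, γ ≠ a → γ ≠ b → ∀ s ∈ X.S, ((γ, a) ∈ s ↔ (γ, b) ∈ s)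

/-- The relation `e_X` of being `X`-twins, as a set of pairs. -/
def twinRel (X : CoherentConfiguration Ω) : Set (Ω × Ω) := {p | XTwin X p.1 p.2}

/-- An equivalence relation on `Ω`, given as a set of pairs. -/
def IsEquivSet (e : Set (Ω × Ω)) : Prop :=
  (∀ a, (a, a) ∈ e) ∧ (∀ a b, (a, b) ∈ e → (b, a) ∈ e) ∧
    (∀ a b c, (a, b) ∈ e → (b, c) ∈ e → (a, c) ∈ e)

/-- A parabolic of `X` is an equivalence relation which is a relation of `X`. -/
def IsParabolic (X : CoherentConfiguration Ω) (e : Set (Ω × Ω)) : Prop :=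
  IsEquivSet e ∧ X.IsRelation e

/-- The dot product (composition) of two relations. -/
def relComp (r s : Set (Ω × Ω)) : Set (Ω × Ω) :=
  {p | ∃ c, (p.1, c) ∈ r ∧ (c, p.2) ∈ s}

/-- An algebraic isomorphism between coherent configurations: a bijection between the
sets of basis relations preserving the intersection numbers. -/
structure AlgIso {Ω : Type u} {Ω' : Type v} (X : CoherentConfiguration Ω)
    (X' : CoherentConfiguration Ω') where
  toFun : Set (Ω × Ω) → Set (Ω' × Ω')
  bijOn : Set.BijOn toFun X.S X'.S
  card_eq : ∀ r ∈ X.S, ∀ s ∈ X.S, ∀ t ∈ X.S, ∀ p ∈ t, ∀ p' ∈ toFun t,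
      interNum r s p = interNum (toFun r) (toFun s) p'

/-- `X` is separable: every algebraic isomorphism from `X` to another coherent
configuration is induced by a bijection of the point sets. -/
def CCSeparable {Ω : Type u} (X : CoherentConfiguration Ω) : Prop :=
  ∀ (Ω' : Type u), Finite Ω' → ∀ (X' : CoherentConfiguration Ω') (φ : AlgIso X X'),
    ∃ f : Ω → Ω', Function.Bijective f ∧ ∀ s ∈ X.S, φ.toFun s = Prod.map f f '' s

/-- `Ω₋(m)`. -/
def OmegaMinus (m : Set (Ω × Ω)) : Set Ω := {a | ∃ b, (a, b) ∈ m}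

/-- `Ω₊(m)`. -/
def OmegaPlus (m : Set (Ω × Ω)) : Set Ω := {b | ∃ a, (a, b) ∈ m}

/-- A matching of `X`: an irreflexive basis relation of valency one in both directions. -/
def IsMatchingCC (X : CoherentConfiguration Ω) (m : Set (Ω × Ω)) : Prop :=
  m ∈ X.S ∧ (∀ p ∈ m, p.1 ≠ p.2) ∧
    (∀ a b c, (a, b) ∈ m → (a, c) ∈ m → b = c) ∧
    (∀ a b c, (a, c) ∈ m → (b, c) ∈ m → a = b)

/-- A pendant matching of `X` with respect to the graph `G`. -/
def IsPendantMatching (G : SimpleGraph Ω) (X : CoherentConfiguration Ω)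
    (m : Set (Ω × Ω)) : Prop :=
  IsMatchingCC X m ∧ OmegaMinus m ≠ OmegaPlus m ∧
    ∀ p ∈ m, G.Adj p.1 p.2 ∧ ∀ c, G.Adj p.1 c → c = p.2

/-- A twin matching of `X` with respect to the graph `G`. -/
def IsTwinMatching (G : SimpleGraph Ω) (X : CoherentConfiguration Ω)
    (m : Set (Ω × Ω)) : Prop :=
  IsMatchingCC X m ∧ OmegaMinus m ≠ OmegaPlus m ∧ ∀ p ∈ m, IsTwin G p.1 p.2

/-- The quotient graph of `G` modulo a (twin) equivalence relation `r`: two distinct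
classes are adjacent iff every vertex of one is adjacent to every vertex of the other. -/
def quotGraph (G : SimpleGraph Ω) (r : Ω → Ω → Prop) : SimpleGraph (Quot r) where
  Adj c d := c ≠ d ∧ ∀ a b : Ω, Quot.mk r a = c → Quot.mk r b = d → G.Adj a b
  symm := ⟨fun _ _ h => ⟨h.1.symm, fun a b ha hb => (h.2 b a hb ha).symm⟩⟩
  loopless := ⟨fun _ h => h.1 rfl⟩

/-- The restriction of a relation on `Ω` to the complement of `Δ`. -/
def restrictRel (Δ : Set Ω) (s : Set (Ω × Ω)) : Set (↥(Δᶜ) × ↥(Δᶜ)) :=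
  {p | ((p.1 : Ω), (p.2 : Ω)) ∈ s}

/-- The restriction of a subset of `Ω` to the complement of `Δ`. -/
def restrictSet (Δ Γ : Set Ω) : Set ↥(Δᶜ) := {x | (x : Ω) ∈ Γ}

/- ====================  Auxiliary development  ==================== -/

section Aux
open Classical

namespace CoherentConfiguration

variable {Ω : Type u} (X : CoherentConfiguration Ω)

lemma exists_basis (p : Ω × Ω) : ∃ s ∈ X.S, p ∈ s := by
  obtain ⟨s, ⟨hs, hp⟩, -⟩ := X.isPartition.2 p
  exact ⟨s, hs, hp⟩

lemma basis_eq {s s' : Set (Ω × Ω)} {p : Ω × Ω} (hs : s ∈ X.S) (hs' : s' ∈ X.S)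
    (hp : p ∈ s) (hp' : p ∈ s') : s = s' := by
  obtain ⟨u, -, hu⟩ := X.isPartition.2 p
  rw [hu s ⟨hs, hp⟩, hu s' ⟨hs', hp'⟩]

lemma basis_nonempty {s : Set (Ω × Ω)} (hs : s ∈ X.S) : s.Nonempty := by
  rcases Set.eq_empty_or_nonempty s with h | h
  · exact absurd (h ▸ hs) X.isPartition.1
  · exact h

/-- The transpose of a relation. -/
def star (s : Set (Ω × Ω)) : Set (Ω × Ω) := {p | (p.2, p.1) ∈ s}

lemma star_mem {s : Set (Ω × Ω)} (hs : s ∈ X.S) : star s ∈ X.S := X.swap_mem s hs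

lemma mem_star {s : Set (Ω × Ω)} {a b : Ω} : (a, b) ∈ star s ↔ (b, a) ∈ s := Iff.rfl

lemma star_star (s : Set (Ω × Ω)) : star (star s) = s := rfl

lemma diag_univ : diagRel (Set.univ : Set Ω) = {p : Ω × Ω | p.1 = p.2} := by
  ext p; simp [diagRel]

/-- If a basis relation contains a diagonal point, it is contained in the diagonal. -/
lemma diag_of_mem_diag {s : Set (Ω × Ω)} (hs : s ∈ X.S) {x : Ω} (hx : (x, x) ∈ s) :
    ∀ p ∈ s, p.1 = p.2 := by
  obtain ⟨T, hT, hTd⟩ := X.diag_isRelation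
  have : (x, x) ∈ ⋃₀ T := by rw [hTd, diag_univ]; exact rfl
  obtain ⟨t, htT, hxt⟩ := this
  have : s = t := X.basis_eq hs (hT htT) hx hxt
  intro p hp
  have : p ∈ ⋃₀ T := ⟨t, htT, this ▸ hp⟩
  rw [hTd, diag_univ] at this; exact this

lemma offdiag_of_mem {s : Set (Ω × Ω)} (hs : s ∈ X.S) {a b : Ω} (hab : (a, b) ∈ s)
    (hne : a ≠ b) : ∀ p ∈ s, p.1 ≠ p.2 := by
  intro p hp h
  have hpp : (p.1, p.1) ∈ s := by
    have : p = (p.1, p.1) := by rw [Prod.ext_iff]; exact ⟨rfl, h.symm⟩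
    rwa [this] at hp
  exact hne (X.diag_of_mem_diag hs hpp (a, b) hab)

/-- A basis relation contained in the diagonal equals `diagRel Δ` for a fiber `Δ`. -/
lemma diag_basis_eq {s : Set (Ω × Ω)} (hs : s ∈ X.S) {x : Ω} (hx : (x, x) ∈ s) :
    s = diagRel {y | (y, y) ∈ s} := by
  ext p
  constructor
  · intro hp
    have h1 := X.diag_of_mem_diag hs hx p hp
    refine ⟨h1, ?_⟩
    show (p.1, p.1) ∈ s
    have : p = (p.1, p.1) := by rw [Prod.ext_iff]; exact ⟨rfl, h1.symm⟩
    rwa [← this]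
  · rintro ⟨h1, h2⟩
    have : p = (p.1, p.1) := by rw [Prod.ext_iff]; exact ⟨rfl, h1.symm⟩
    rw [this]; exact h2

/-- Every point lies in a fiber. -/
lemma exists_fiber (x : Ω) : ∃ Δ : Set Ω, diagRel Δ ∈ X.S ∧ x ∈ Δ := by
  obtain ⟨s, hs, hx⟩ := X.exists_basis (x, x)
  refine ⟨{y | (y, y) ∈ s}, ?_, hx⟩
  rw [← X.diag_basis_eq hs hx]; exact hs

lemma mem_diagRel {Δ : Set Ω} {a b : Ω} : (a, b) ∈ diagRel Δ ↔ a = b ∧ a ∈ Δ := Iff.rfl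

lemma fiber_unique {Δ Δ' : Set Ω} (h : diagRel Δ ∈ X.S) (h' : diagRel Δ' ∈ X.S)
    {x : Ω} (hx : x ∈ Δ) (hx' : x ∈ Δ') : Δ = Δ' := by
  have := X.basis_eq h h' (p := (x, x)) ⟨rfl, hx⟩ ⟨rfl, hx'⟩
  ext y
  constructor
  · intro hy
    have : (y, y) ∈ diagRel Δ' := this ▸ ⟨rfl, hy⟩
    exact this.2
  · intro hy
    have : (y, y) ∈ diagRel Δ := this ▸ (⟨rfl, hy⟩ : (y,y) ∈ diagRel Δ')
    exact this.2

variable [Finite Ω]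

lemma interNum_ne_zero_iff {r s : Set (Ω × Ω)} {p : Ω × Ω} :
    interNum r s p ≠ 0 ↔ ∃ γ, (p.1, γ) ∈ r ∧ (γ, p.2) ∈ s := by
  rw [interNum]
  constructor
  · intro h
    have : {γ | (p.1, γ) ∈ r ∧ (γ, p.2) ∈ s}.Nonempty := by
      rw [Set.nonempty_iff_ne_empty]
      intro he
      exact h (by rw [he]; simp)
    exact this
  · intro ⟨γ, hγ⟩ h
    rw [Set.ncard_eq_zero (Set.toFinite _)] at h
    exact absurd (h ▸ hγ : γ ∈ (∅ : Set Ω)) (Set.notMem_empty γ)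

/-- Domain of a nonempty basis relation is a full fiber. -/
lemma dom_fiber {s : Set (Ω × Ω)} (hs : s ∈ X.S) {a b : Ω} (hab : (a, b) ∈ s)
    {Δ : Set Ω} (hΔ : diagRel Δ ∈ X.S) (ha : a ∈ Δ) :
    (∀ p ∈ s, p.1 ∈ Δ) ∧ (∀ x ∈ Δ, ∃ y, (x, y) ∈ s) := by
  constructor
  · rintro ⟨x, y⟩ hp
    have h1 : interNum (diagRel Δ) s (a, b) ≠ 0 := by
      rw [interNum_ne_zero_iff]
      exact ⟨a, ⟨rfl, ha⟩, hab⟩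
    have h2 := X.coherent _ hΔ _ hs _ hs _ hab _ hp
    rw [h2] at h1
    rw [interNum_ne_zero_iff] at h1
    obtain ⟨γ, ⟨hγ1, hγ2⟩, -⟩ := h1
    exact hγ1 ▸ hγ2
  · intro x hx
    have h1 : interNum s (star s) (a, a) ≠ 0 := by
      rw [interNum_ne_zero_iff]
      exact ⟨b, hab, hab⟩
    have h2 := X.coherent _ hs _ (X.star_mem hs) _ hΔ _ (⟨rfl, ha⟩ : (a,a) ∈ diagRel Δ)
      _ (⟨rfl, hx⟩ : (x,x) ∈ diagRel Δ)
    rw [h2] at h1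
    rw [interNum_ne_zero_iff] at h1
    obtain ⟨γ, hγ1, -⟩ := h1
    exact ⟨γ, hγ1⟩

end CoherentConfiguration

end Aux

section Twin
open CoherentConfiguration
variable {Ω : Type u} {X : CoherentConfiguration Ω}

lemma xtwin_refl (a : Ω) : XTwin X a a := fun _ _ _ _ _ => Iff.rfl

lemma xtwin_symm {a b : Ω} (h : XTwin X a b) : XTwin X b a :=
  fun γ h1 h2 s hs => (h γ h2 h1 s hs).symm

/-- Left version of the twin property. -/
lemma xtwin_left {a b : Ω} (h : XTwin X a b) {γ : Ω} (h1 : γ ≠ a) (h2 : γ ≠ b)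
    {s : Set (Ω × Ω)} (hs : s ∈ X.S) : (a, γ) ∈ s ↔ (b, γ) ∈ s := by
  have := h γ h1 h2 (star s) (X.star_mem hs)
  exact this

/-- If some pair is not a twin pair, then any nontrivial twin pair admits a third point. -/
lemma exists_third (hnt : ¬ ∀ x y : Ω, XTwin X x y) {a b : Ω} (h : XTwin X a b)
    (hne : a ≠ b) : ∃ γ : Ω, γ ≠ a ∧ γ ≠ b := by
  by_contra hc
  push_neg at hc
  apply hnt
  intro x y
  have hx := hc x
  have hy := hc y
  rcases Classical.em (x = a) with hxa | hxa <;> rcases Classical.em (y = a) with hya | hya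
  · rw [hxa, hya]; exact xtwin_refl a
  · have hyb := hy hya
    rw [hxa, hyb]; exact h
  · have hxb := hx hxa
    rw [hxb, hya]; exact xtwin_symm h
  · have hxb := hx hxa
    have hyb := hy hya
    rw [hxb, hyb]; exact xtwin_refl b

/-- Twins lie in the same fiber (in the non-degenerate case). -/
lemma xtwin_same_fiber [Finite Ω] (hnt : ¬ ∀ x y : Ω, XTwin X x y) {a b : Ω}
    (h : XTwin X a b) {Δ : Set Ω} (hΔ : diagRel Δ ∈ X.S) (ha : a ∈ Δ) : b ∈ Δ := by
  rcases Classical.em (a = b) with rfl | hne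
  · exact ha
  obtain ⟨γ, hγa, hγb⟩ := exists_third hnt h hne
  obtain ⟨r, hr, hγr⟩ := X.exists_basis (γ, a)
  have hγrb : (γ, b) ∈ r := (h γ hγa hγb r hr).mp hγr
  have h1 : interNum r (diagRel Δ) (γ, a) ≠ 0 := by
    rw [interNum_ne_zero_iff]
    exact ⟨a, hγr, rfl, ha⟩
  rw [X.coherent _ hr _ hΔ _ hr _ hγr _ hγrb] at h1
  rw [interNum_ne_zero_iff] at h1
  obtain ⟨γ', -, h2, h3⟩ := h1
  exact (show γ' = b from h2) ▸ h3

/-- Directional step for transitivity at the exceptional point. -/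
private lemma xtwin_trans_dir [Finite Ω] {a b c : Ω}
    (hab : a ≠ b) (hbc : b ≠ c) (hac : a ≠ c)
    (h1 : XTwin X a b) (h2 : XTwin X b c)
    {s : Set (Ω × Ω)} (hs : s ∈ X.S) (hm : (b, a) ∈ s) : (b, c) ∈ s := by
  obtain ⟨u, hu, hab_u⟩ := X.exists_basis (a, b)
  -- (a,c) ∈ u
  have hac_u : (a, c) ∈ u := (h2 a hab hac u hu).mp hab_u
  -- (b,c) ∈ u
  have hbc_u : (b, c) ∈ u := by
    have h3 : (c, a) ∈ star u := hac_u
    have h4 : (c, b) ∈ star u := (h1 c (Ne.symm hac) (Ne.symm hbc) _ (X.star_mem hu)).mp h3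
    exact h4
  -- s = star u
  have hsu : s = star u := X.basis_eq hs (X.star_mem hu) hm hab_u
  -- u has no diagonal points
  have huo : ∀ p ∈ u, p.1 ≠ p.2 := X.offdiag_of_mem hu hab_u hab
  -- u = star u
  have key : u = star u := by
    have hpos : interNum u u (a, c) ≠ 0 := by
      rw [interNum_ne_zero_iff]; exact ⟨b, hab_u, hbc_u⟩
    rw [← X.coherent _ hu _ hu _ hu _ hab_u _ hac_u] at hpos
    rw [interNum_ne_zero_iff] at hpos
    obtain ⟨γ, hγ1, hγ2⟩ := hpos
    have hγa : γ ≠ a := fun h => huo _ hγ1 (show a = γ from h.symm)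
    have hγb : γ ≠ b := fun h => huo _ hγ2 (show γ = b from h)
    rcases Classical.em (γ = c) with rfl | hγc
    · exact X.basis_eq hu (X.star_mem hu) hγ2 (mem_star.mpr hbc_u)
    · have h5 : (γ, c) ∈ u := (h2 γ hγb hγc u hu).mp hγ2
      have h6 : (γ, a) ∈ star u := hγ1
      have h7 : (γ, b) ∈ star u := (h1 γ hγa hγb _ (X.star_mem hu)).mp h6
      exact X.basis_eq hu (X.star_mem hu) hγ2 h7
  rw [hsu, ← key]; exact hbc_u

lemma xtwin_trans [Finite Ω] {a b c : Ω} (h1 : XTwin X a b) (h2 : XTwin X b c) :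
    XTwin X a c := by
  rcases Classical.em (∀ x y : Ω, XTwin X x y) with htot | hnt
  · exact htot a c
  rcases Classical.em (a = b) with rfl | hab
  · exact h2
  rcases Classical.em (b = c) with rfl | hbc
  · exact h1
  rcases Classical.em (a = c) with rfl | hac
  · exact xtwin_refl a
  intro γ hγa hγc s hs
  rcases Classical.em (γ = b) with rfl | hγb
  · exact ⟨fun h => xtwin_trans_dir hab hbc hac h1 h2 hs h,
      fun h => xtwin_trans_dir (Ne.symm hbc) (Ne.symm hab) (Ne.symm hac)
        (xtwin_symm h2) (xtwin_symm h1) hs h⟩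
  · exact (h1 γ hγa hγb s hs).trans (h2 γ hγb hγc s hs)

lemma xtwin_equivalence [Finite Ω] : Equivalence (XTwin X) :=
  ⟨xtwin_refl, xtwin_symm, xtwin_trans⟩

lemma quot_mk_eq_iff [Finite Ω] {a b : Ω} :
    Quot.mk (XTwin X) a = Quot.mk (XTwin X) b ↔ XTwin X a b := by
  rw [Quot.eq]
  exact Equivalence.eqvGen_iff xtwin_equivalence

/-- `X`-twins are graph twins, provided the arc set is a relation of `X`. -/
lemma xtwin_isTwin {G : SimpleGraph Ω} (hG : X.IsRelation (adjRel G)) {a b : Ω}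
    (h : XTwin X a b) : IsTwin G a b := by
  obtain ⟨T, hT, hTe⟩ := hG
  intro γ h1 h2
  have key : ∀ x y : Ω, (G.Adj x y ↔ ∃ t ∈ T, (x, y) ∈ t) := by
    intro x y
    rw [show (G.Adj x y) ↔ (x, y) ∈ adjRel G from Iff.rfl, ← hTe]
    exact Set.mem_sUnion
  rw [key, key]
  constructor
  · rintro ⟨t, htT, hm⟩
    exact ⟨t, htT, (h γ h1 h2 t (hT htT)).mp hm⟩
  · rintro ⟨t, htT, hm⟩
    exact ⟨t, htT, (h γ h1 h2 t (hT htT)).mpr hm⟩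

end Twin

section Counting
open Classical

/-- Cardinality of a finite disjoint union. -/
lemma ncard_biUnion_eq {ι α : Type*} [Finite α] (F : Finset ι) (f : ι → Set α)
    (hdisj : ∀ i ∈ F, ∀ j ∈ F, i ≠ j → Disjoint (f i) (f j)) :
    (⋃ i ∈ F, f i).ncard = ∑ i ∈ F, (f i).ncard := by
  classical
  induction F using Finset.induction with
  | empty => simp
  | @insert i F hiF ih =>
    rw [Finset.set_biUnion_insert, Finset.sum_insert hiF,
      Set.ncard_union_eq ?_ (Set.toFinite _) (Set.toFinite _),
      ih (fun a ha b hb hab => hdisj a (Finset.mem_insert_of_mem ha)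
        b (Finset.mem_insert_of_mem hb) hab)]
    · rw [Set.disjoint_iUnion_right]
      intro j
      rw [Set.disjoint_iUnion_right]
      intro hjF
      exact hdisj i (Finset.mem_insert_self i F) j (Finset.mem_insert_of_mem hjF)
        (fun h => hiF (h ▸ hjF))

/-- Counting a preimage when all fibers over the target set have the same size. -/
lemma ncard_preimage_eq {α κ : Type*} [Finite α] [Finite κ] (q : α → κ) (A : Set κ)
    (k : ℕ) (h : ∀ c ∈ A, {x | q x = c}.ncard = k) :
    (q ⁻¹' A).ncard = k * A.ncard := by
  classical
  have hA : A.Finite := Set.toFinite A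
  have h1 : q ⁻¹' A = ⋃ c ∈ hA.toFinset, {x | q x = c} := by
    ext x
    simp only [Set.mem_preimage, Set.mem_iUnion, Set.Finite.mem_toFinset, Set.mem_setOf_eq]
    exact ⟨fun hx => ⟨q x, hx, rfl⟩, fun ⟨c, hc, hqc⟩ => hqc ▸ hc⟩
  rw [h1, ncard_biUnion_eq _ _ ?_]
  · rw [Finset.sum_congr rfl (fun c hc => h c (hA.mem_toFinset.mp hc))]
    rw [Finset.sum_const, smul_eq_mul, mul_comm]
    rw [Set.ncard_eq_toFinset_card _ hA]
  · intro c hc d hd hcd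
    rw [Set.disjoint_left]
    intro x hx hx'
    exact hcd ((show q x = c from hx).symm.trans (show q x = d from hx'))

lemma ncard_subsingleton_eq {α β : Type*} {A : Set α} {B : Set β} {x : α} {y : β}
    (hA : A ⊆ {x}) (hB : B ⊆ {y}) (h : A.Nonempty ↔ B.Nonempty) : A.ncard = B.ncard := by
  rcases Set.eq_empty_or_nonempty A with hAe | hAn
  · have : B = ∅ := by
      rw [← Set.not_nonempty_iff_eq_empty, ← h, hAe]
      exact Set.not_nonempty_empty
    rw [hAe, this, Set.ncard_empty, Set.ncard_empty]
  · have hBn := h.mp hAn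
    have hA1 : A = {x} := (Set.subset_singleton_iff_eq.mp hA).resolve_left
      (Set.nonempty_iff_ne_empty.mp hAn)
    have hB1 : B = {y} := (Set.subset_singleton_iff_eq.mp hB).resolve_left
      (Set.nonempty_iff_ne_empty.mp hBn)
    rw [hA1, hB1, Set.ncard_singleton, Set.ncard_singleton]

end Counting

section Parabolic
open CoherentConfiguration Classical
variable {Ω : Type u} [Finite Ω] {X : CoherentConfiguration Ω}

/-- The set of common neighbours witnessing twin-ness. -/
private def Wset (X : CoherentConfiguration Ω) (x y : Ω) : Set Ω :=
  {γ | ∃ u ∈ X.S, (γ, x) ∈ u ∧ (γ, y) ∈ u}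

private lemma Wset_subset {x y : Ω} (hne : x ≠ y) : Wset X x y ⊆ ({x, y} : Set Ω)ᶜ := by
  rintro γ ⟨u, hu, h1, h2⟩ hγ
  rcases hγ with h | h
  · rw [h] at h1 h2
    have h3 := X.diag_of_mem_diag hu h1 (x, y) h2
    exact hne h3
  · rw [h] at h1 h2
    have h3 := X.diag_of_mem_diag hu h2 (y, x) h1
    exact hne (show x = y from h3.symm)

private lemma Wset_eq_of_twin {x y : Ω} (hne : x ≠ y) (h : XTwin X x y) :
    Wset X x y = ({x, y} : Set Ω)ᶜ := by
  refine Set.Subset.antisymm (Wset_subset hne) ?_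
  intro γ hγ
  simp only [Set.mem_compl_iff, Set.mem_insert_iff, Set.mem_singleton_iff, not_or] at hγ
  obtain ⟨u, hu, h1⟩ := X.exists_basis (γ, x)
  exact ⟨u, hu, h1, (h γ hγ.1 hγ.2 u hu).mp h1⟩

private lemma twin_of_Wset {x y : Ω} (hW : Wset X x y = ({x, y} : Set Ω)ᶜ) :
    XTwin X x y := by
  intro γ h1 h2 s hs
  have hγ : γ ∈ Wset X x y := by
    rw [hW]
    simp only [Set.mem_compl_iff, Set.mem_insert_iff, Set.mem_singleton_iff, not_or]
    exact ⟨h1, h2⟩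
  obtain ⟨u, hu, hu1, hu2⟩ := hγ
  constructor
  · intro hγs
    rwa [X.basis_eq hs hu hγs hu1]
  · intro hγs
    rwa [X.basis_eq hs hu hγs hu2]

private lemma Wset_ncard_eq {t : Set (Ω × Ω)} (ht : t ∈ X.S) {a b a' b' : Ω}
    (hab : (a, b) ∈ t) (hab' : (a', b') ∈ t) :
    (Wset X a b).ncard = (Wset X a' b').ncard := by
  classical
  have hSfin : X.S.Finite := Set.toFinite _
  have key : ∀ x y : Ω, Wset X x y = ⋃ u ∈ hSfin.toFinset, {γ | (γ, x) ∈ u ∧ (γ, y) ∈ u} := by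
    intro x y
    ext γ
    simp only [Wset, Set.mem_setOf_eq, Set.mem_iUnion, Set.Finite.mem_toFinset]
    constructor
    · rintro ⟨u, hu, h1, h2⟩; exact ⟨u, hu, h1, h2⟩
    · rintro ⟨u, hu, h1, h2⟩; exact ⟨u, hu, h1, h2⟩

  have hdisj : ∀ x y : Ω, ∀ u ∈ hSfin.toFinset, ∀ v ∈ hSfin.toFinset, u ≠ v →
      Disjoint {γ | (γ, x) ∈ u ∧ (γ, y) ∈ u} {γ | (γ, x) ∈ v ∧ (γ, y) ∈ v} := by
    intro x y u hu v hv huv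
    rw [Set.disjoint_left]
    rintro γ ⟨h1, -⟩ ⟨h2, -⟩
    exact huv (X.basis_eq (hSfin.mem_toFinset.mp hu) (hSfin.mem_toFinset.mp hv) h1 h2)
  rw [key a b, key a' b', ncard_biUnion_eq _ _ (hdisj a b), ncard_biUnion_eq _ _ (hdisj a' b')]
  refine Finset.sum_congr rfl ?_
  intro u huF
  have hu := hSfin.mem_toFinset.mp huF
  have h1 : {γ | (γ, a) ∈ u ∧ (γ, b) ∈ u} = {γ | ((a, b).1, γ) ∈ star u ∧ (γ, (a, b).2) ∈ u} := rfl
  have h2 : {γ | (γ, a') ∈ u ∧ (γ, b') ∈ u} =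
      {γ | ((a', b').1, γ) ∈ star u ∧ (γ, (a', b').2) ∈ u} := rfl
  rw [h1, h2]
  exact X.coherent _ (X.star_mem hu) _ hu _ ht _ hab _ hab'

/-- Twin-ness only depends on the basis relation containing the pair. -/
lemma xtwin_parabolic {t : Set (Ω × Ω)} (ht : t ∈ X.S) {a b a' b' : Ω}
    (hab : (a, b) ∈ t) (h : XTwin X a b) (hab' : (a', b') ∈ t) : XTwin X a' b' := by
  rcases Classical.em (a = b) with rfl | hne
  · have := X.diag_of_mem_diag ht hab (a', b') hab'
    rw [show a' = b' from this]
    exact xtwin_refl b'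
  · have hne' : a' ≠ b' := X.offdiag_of_mem ht hab hne (a', b') hab'
    apply twin_of_Wset
    refine Set.eq_of_subset_of_ncard_le (Wset_subset hne') ?_ (Set.toFinite _)
    rw [← Wset_ncard_eq ht hab hab', Wset_eq_of_twin hne h]
    have e1 : (({a, b} : Set Ω)).ncard + (({a, b} : Set Ω))ᶜ.ncard = Nat.card Ω :=
      Set.ncard_add_ncard_compl _
    have e2 : (({a', b'} : Set Ω)).ncard + (({a', b'} : Set Ω))ᶜ.ncard = Nat.card Ω :=
      Set.ncard_add_ncard_compl _
    rw [Set.ncard_pair hne] at e1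
    rw [Set.ncard_pair hne'] at e2
    omega

/-- The twin class of a point. -/
def twinCls (X : CoherentConfiguration Ω) (x : Ω) : Set Ω := {y | XTwin X x y}

lemma twinCls_ncard_const {Δ : Set Ω} (hΔ : diagRel Δ ∈ X.S) {x x' : Ω}
    (hx : x ∈ Δ) (hx' : x' ∈ Δ) : (twinCls X x).ncard = (twinCls X x').ncard := by
  classical
  have hSfin : X.S.Finite := Set.toFinite _
  have key : ∀ z : Ω, twinCls X z = ⋃ u ∈ hSfin.toFinset, {y | (z, y) ∈ u ∧ XTwin X z y} := by
    intro z
    ext y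
    simp only [twinCls, Set.mem_setOf_eq, Set.mem_iUnion, Set.Finite.mem_toFinset]
    constructor
    · intro hy
      obtain ⟨u, hu, hm⟩ := X.exists_basis (z, y)
      exact ⟨u, hu, hm, hy⟩

    · rintro ⟨u, -, -, hy⟩; exact hy
  have hdisj : ∀ z : Ω, ∀ u ∈ hSfin.toFinset, ∀ v ∈ hSfin.toFinset, u ≠ v →
      Disjoint {y | (z, y) ∈ u ∧ XTwin X z y} {y | (z, y) ∈ v ∧ XTwin X z y} := by
    intro z u hu v hv huv
    rw [Set.disjoint_left]
    rintro y ⟨h1, -⟩ ⟨h2, -⟩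
    exact huv (X.basis_eq (hSfin.mem_toFinset.mp hu) (hSfin.mem_toFinset.mp hv) h1 h2)
  rw [key x, key x', ncard_biUnion_eq _ _ (hdisj x), ncard_biUnion_eq _ _ (hdisj x')]
  refine Finset.sum_congr rfl ?_
  intro u huF
  have hu := hSfin.mem_toFinset.mp huF
  rcases Classical.em (∀ p ∈ u, XTwin X p.1 p.2) with htw | hntw
  · have h1 : ∀ z : Ω, {y | (z, y) ∈ u ∧ XTwin X z y} = {y | (z, y) ∈ u} := by
      intro z; ext y
      exact ⟨fun h => h.1, fun h => ⟨h, htw (z, y) h⟩⟩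
    have h2 : ∀ z : Ω, {y | (z, y) ∈ u} =
        {γ | ((z, z).1, γ) ∈ u ∧ (γ, (z, z).2) ∈ star u} := by
      intro z; ext y
      exact ⟨fun h => ⟨h, h⟩, fun h => h.1⟩
    rw [h1, h1, h2, h2]
    exact X.coherent _ hu _ (X.star_mem hu) _ hΔ _ (⟨rfl, hx⟩ : (x, x) ∈ diagRel Δ)
      _ (⟨rfl, hx'⟩ : (x', x') ∈ diagRel Δ)
  · have h1 : ∀ z : Ω, {y | (z, y) ∈ u ∧ XTwin X z y} = (∅ : Set Ω) := by
      intro z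
      rw [Set.eq_empty_iff_forall_notMem]
      rintro y ⟨hm, htw⟩
      exact hntw (fun p hp => xtwin_parabolic hu hm htw hp)
    rw [h1, h1]

end Parabolic

section Quotient
open CoherentConfiguration Classical

variable {Ω : Type u}

/-- The quotient map modulo `X`-twins. -/
def qm (X : CoherentConfiguration Ω) : Ω → Quot (XTwin X) := Quot.mk (XTwin X)

/-- Image of a relation in the quotient. -/
def imgRel (X : CoherentConfiguration Ω) (s : Set (Ω × Ω)) :
    Set (Quot (XTwin X) × Quot (XTwin X)) := Prod.map (qm X) (qm X) '' s

variable [Finite Ω] {X : CoherentConfiguration Ω}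

lemma qm_eq_iff {a b : Ω} : qm X a = qm X b ↔ XTwin X a b := quot_mk_eq_iff

lemma mem_imgRel {s : Set (Ω × Ω)} {c d : Quot (XTwin X)} :
    (c, d) ∈ imgRel X s ↔ ∃ x y : Ω, (x, y) ∈ s ∧ qm X x = c ∧ qm X y = d := by
  constructor
  · rintro ⟨⟨x, y⟩, hm, heq⟩
    rw [Prod.ext_iff] at heq
    exact ⟨x, y, hm, heq.1, heq.2⟩
  · rintro ⟨x, y, hm, h1, h2⟩
    exact ⟨(x, y), hm, by rw [Prod.ext_iff]; exact ⟨h1, h2⟩⟩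

lemma imgRel_star {s : Set (Ω × Ω)} :
    imgRel X (star s) = {p | (p.2, p.1) ∈ imgRel X s} := by
  ext ⟨c, d⟩
  simp only [Set.mem_setOf_eq, mem_imgRel]
  constructor
  · rintro ⟨x, y, hm, h1, h2⟩
    exact ⟨y, x, hm, h2, h1⟩
  · rintro ⟨x, y, hm, h1, h2⟩
    exact ⟨y, x, hm, h2, h1⟩

variable (hnt : ¬ ∀ x y : Ω, XTwin X x y)
include hnt

/-- Saturation: moving the left end of a pair inside its twin class. -/
lemma sat_left {r : Set (Ω × Ω)} (hr : r ∈ X.S) {a a₁ c : Ω} (h1 : (a₁, c) ∈ r)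
    (h : XTwin X a a₁) : ∃ c', XTwin X c c' ∧ (a, c') ∈ r := by
  rcases Classical.em (a = a₁) with rfl | hne
  · exact ⟨c, xtwin_refl c, h1⟩
  rcases Classical.em (c = a₁) with rfl | hca1
  · have hΔ : diagRel {y | (y, y) ∈ r} ∈ X.S := by
      rw [← X.diag_basis_eq hr h1]; exact hr
    have haΔ : a ∈ {y | (y, y) ∈ r} :=
      xtwin_same_fiber hnt (xtwin_symm h) hΔ (Set.mem_setOf_eq ▸ h1)
    exact ⟨a, xtwin_symm h, haΔ⟩
  rcases Classical.em (c = a) with hca | hca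
  · obtain ⟨Δ, hΔ, ha₁⟩ := X.exists_fiber a₁
    have hdom := X.dom_fiber hr h1 hΔ ha₁
    have haΔ : a ∈ Δ := xtwin_same_fiber hnt (xtwin_symm h) hΔ ha₁
    obtain ⟨c', hc'⟩ := hdom.2 a haΔ
    refine ⟨c', ?_, hc'⟩
    have htw1 : XTwin X a₁ c := by rw [hca]; exact xtwin_symm h
    have := xtwin_parabolic hr h1 htw1 hc'
    rw [hca]
    exact this
  · exact ⟨c, xtwin_refl c, (xtwin_left h hca hca1 hr).mpr h1⟩

lemma mem_imgRel_left {r : Set (Ω × Ω)} (hr : r ∈ X.S) {a : Ω} {d : Quot (XTwin X)} :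
    (qm X a, d) ∈ imgRel X r ↔ ∃ c, d = qm X c ∧ (a, c) ∈ r := by
  rw [mem_imgRel]
  constructor
  · rintro ⟨x, y, hm, h1, h2⟩
    obtain ⟨c', hc'1, hc'2⟩ := sat_left hnt hr hm (qm_eq_iff.mp h1.symm)
    refine ⟨c', ?_, hc'2⟩
    rw [← h2, qm_eq_iff]
    exact hc'1
  · rintro ⟨c, h1, h2⟩
    exact ⟨a, c, h2, rfl, h1.symm⟩

lemma mem_imgRel_right {s : Set (Ω × Ω)} (hs : s ∈ X.S) {b : Ω} {d : Quot (XTwin X)} :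
    (d, qm X b) ∈ imgRel X s ↔ ∃ c, d = qm X c ∧ (c, b) ∈ s := by
  have h1 : (d, qm X b) ∈ imgRel X s ↔ (qm X b, d) ∈ imgRel X (star s) := by
    rw [imgRel_star]; exact Iff.rfl
  rw [h1, mem_imgRel_left hnt (X.star_mem hs)]
  exact Iff.rfl

/-- The image of a basis relation consisting of twin pairs is the diagonal of a
quotient fiber. -/
lemma imgRel_e_fiber {s : Set (Ω × Ω)} (hs : s ∈ X.S) {a b : Ω} (hab : (a, b) ∈ s)
    (h : XTwin X a b) {Δ : Set Ω} (hΔ : diagRel Δ ∈ X.S) (ha : a ∈ Δ) :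
    imgRel X s = diagRel (qm X '' Δ) := by
  have htw : ∀ p ∈ s, XTwin X p.1 p.2 := fun p hp => xtwin_parabolic hs hab h hp
  have hdom := X.dom_fiber hs hab hΔ ha
  ext ⟨c, d⟩
  rw [mem_imgRel, mem_diagRel]
  constructor
  · rintro ⟨x, y, hm, h1, h2⟩
    have hxy : XTwin X x y := htw (x, y) hm
    constructor
    · rw [← h1, ← h2, qm_eq_iff]; exact hxy
    · rw [← h1]
      exact ⟨x, hdom.1 (x, y) hm, rfl⟩
  · rintro ⟨hcd, x, hx, hqx⟩
    obtain ⟨y, hy⟩ := hdom.2 x hx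
    refine ⟨x, y, hy, hqx, ?_⟩
    rw [← hcd, ← hqx, qm_eq_iff]
    exact xtwin_symm (htw (x, y) hy)

/-- Images of basis relations are equal or disjoint. -/
lemma imgRel_eq_of_inter {s s' : Set (Ω × Ω)} (hs : s ∈ X.S) (hs' : s' ∈ X.S)
    (h : (imgRel X s ∩ imgRel X s').Nonempty) : imgRel X s = imgRel X s' := by
  obtain ⟨⟨c, d⟩, h1, h2⟩ := h
  rw [mem_imgRel] at h1 h2
  obtain ⟨a, b, hab, ha, hb⟩ := h1
  obtain ⟨a', b', hab', ha', hb'⟩ := h2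
  have htaa' : XTwin X a a' := qm_eq_iff.mp (ha.trans ha'.symm)
  have htbb' : XTwin X b b' := qm_eq_iff.mp (hb.trans hb'.symm)
  rcases Classical.em (XTwin X a b) with htw | hntw
  · -- both relations consist of twin pairs; images are diagonals of a common fiber
    have htw' : XTwin X a' b' :=
      xtwin_trans (xtwin_trans (xtwin_symm htaa') htw) htbb'
    obtain ⟨Δ, hΔ, ha₀⟩ := X.exists_fiber a
    have ha₀' : a' ∈ Δ := xtwin_same_fiber hnt htaa' hΔ ha₀
    rw [imgRel_e_fiber hnt hs hab htw hΔ ha₀, imgRel_e_fiber hnt hs' hab' htw' hΔ ha₀']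
  · -- the relations are equal
    have hne_ab : a ≠ b := fun hh => hntw (hh ▸ xtwin_refl a)
    have step1 : (a', b) ∈ s := by
      rcases Classical.em (a = a') with rfl | hne
      · exact hab
      have hba : b ≠ a := Ne.symm hne_ab
      have hba' : b ≠ a' := by
        intro hh
        exact hntw (hh ▸ htaa')
      exact (xtwin_left htaa' hba hba' hs).mp hab
    have step2 : (a', b') ∈ s := by
      rcases Classical.em (b = b') with rfl | hne
      · exact step1
      have h1 : a' ≠ b := by
        intro hh
        exact hntw (xtwin_trans htaa' (hh ▸ xtwin_refl a' : XTwin X a' b))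
      have h2 : a' ≠ b' := by
        intro hh
        exact hntw (xtwin_trans htaa' (xtwin_trans (hh ▸ xtwin_refl a') (xtwin_symm htbb')))
      exact (htbb' a' h1 h2 s hs).mp step1
    rw [X.basis_eq hs hs' step2 hab']

end Quotient

section QuotCC
open CoherentConfiguration Classical
variable {Ω : Type u} [Finite Ω] {X : CoherentConfiguration Ω}

/-- `e ∘ s` as a set. -/
private def compES (X : CoherentConfiguration Ω) (s : Set (Ω × Ω)) : Set (Ω × Ω) :=
  {p | ∃ d, XTwin X p.1 d ∧ (d, p.2) ∈ s}

private lemma compES_basis {s u : Set (Ω × Ω)} (hs : s ∈ X.S) (hu : u ∈ X.S)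
    {x y : Ω} (hxy : (x, y) ∈ u) (hf : (x, y) ∈ compES X s) :
    ∀ p ∈ u, p ∈ compES X s := by
  obtain ⟨d, htd, hds⟩ := hf
  obtain ⟨u₁, hu₁, hxd⟩ := X.exists_basis (x, d)
  have hpos : interNum u₁ s (x, y) ≠ 0 := by
    rw [interNum_ne_zero_iff]
    exact ⟨d, hxd, hds⟩
  rintro ⟨x', y'⟩ hp
  have := X.coherent _ hu₁ _ hs _ hu _ hxy _ hp
  rw [this] at hpos
  rw [interNum_ne_zero_iff] at hpos
  obtain ⟨γ, h1, h2⟩ := hpos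
  exact ⟨γ, xtwin_parabolic hu₁ hxd htd h1, h2⟩

variable (hnt : ¬ ∀ x y : Ω, XTwin X x y)
include hnt

private lemma quot_interNum_set {r s : Set (Ω × Ω)} (hr : r ∈ X.S) (hs : s ∈ X.S)
    (a b : Ω) :
    {γ : Quot (XTwin X) | (qm X a, γ) ∈ imgRel X r ∧ (γ, qm X b) ∈ imgRel X s} =
      qm X '' {c | (a, c) ∈ r ∧ (c, b) ∈ compES X s} := by
  ext γ
  simp only [Set.mem_setOf_eq, Set.mem_image]
  constructor
  · rintro ⟨h1, h2⟩
    obtain ⟨c, hc1, hc2⟩ := (mem_imgRel_left hnt hr).mp h1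
    obtain ⟨d, hd1, hd2⟩ := (mem_imgRel_right hnt hs).mp h2
    refine ⟨c, ⟨hc2, d, ?_, hd2⟩, hc1.symm⟩
    rw [← qm_eq_iff, ← hc1, ← hd1]
  · rintro ⟨c, ⟨hc1, d, hd1, hd2⟩, hc2⟩
    constructor
    · rw [← hc2]
      exact (mem_imgRel_left hnt hr).mpr ⟨c, rfl, hc1⟩
    · rw [← hc2]
      exact (mem_imgRel_right hnt hs).mpr ⟨d, (qm_eq_iff.mpr hd1).symm ▸ rfl, hd2⟩

private lemma quot_C_ncard {r s t : Set (Ω × Ω)} (hr : r ∈ X.S) (hs : s ∈ X.S)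
    (ht : t ∈ X.S) {a b a' b' : Ω} (hab : (a, b) ∈ t) (hab' : (a', b') ∈ t) :
    {c | (a, c) ∈ r ∧ (c, b) ∈ compES X s}.ncard =
      {c | (a', c) ∈ r ∧ (c, b') ∈ compES X s}.ncard := by
  classical
  have hSfin : X.S.Finite := Set.toFinite _
  have key : ∀ x y : Ω, {c | (x, c) ∈ r ∧ (c, y) ∈ compES X s} =
      ⋃ u ∈ hSfin.toFinset, {c | (x, c) ∈ r ∧ (c, y) ∈ u ∧ (c, y) ∈ compES X s} := by
    intro x y
    ext c
    simp only [Set.mem_setOf_eq, Set.mem_iUnion, Set.Finite.mem_toFinset]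
    constructor
    · rintro ⟨h1, h2⟩
      obtain ⟨u, hu, hcu⟩ := X.exists_basis (c, y)
      exact ⟨u, hu, h1, hcu, h2⟩
    · rintro ⟨u, -, h1, -, h2⟩
      exact ⟨h1, h2⟩
  have hdisj : ∀ x y : Ω, ∀ u ∈ hSfin.toFinset, ∀ v ∈ hSfin.toFinset, u ≠ v →
      Disjoint {c | (x, c) ∈ r ∧ (c, y) ∈ u ∧ (c, y) ∈ compES X s}
        {c | (x, c) ∈ r ∧ (c, y) ∈ v ∧ (c, y) ∈ compES X s} := by
    intro x y u hu v hv huv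
    rw [Set.disjoint_left]
    rintro c ⟨-, h1, -⟩ ⟨-, h2, -⟩
    exact huv (X.basis_eq (hSfin.mem_toFinset.mp hu) (hSfin.mem_toFinset.mp hv) h1 h2)
  rw [key a b, key a' b', ncard_biUnion_eq _ _ (hdisj a b), ncard_biUnion_eq _ _ (hdisj a' b')]
  refine Finset.sum_congr rfl ?_
  intro u huF
  have hu := hSfin.mem_toFinset.mp huF
  rcases Classical.em (∀ p ∈ u, p ∈ compES X s) with hsub | hsub
  · have h1 : ∀ x y : Ω, {c | (x, c) ∈ r ∧ (c, y) ∈ u ∧ (c, y) ∈ compES X s} =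
        {γ | ((x, y).1, γ) ∈ r ∧ (γ, (x, y).2) ∈ u} := by
      intro x y
      ext c
      simp only [Set.mem_setOf_eq]
      exact ⟨fun h => ⟨h.1, h.2.1⟩, fun h => ⟨h.1, h.2, hsub _ h.2⟩⟩
    rw [h1, h1]
    exact X.coherent _ hr _ hu _ ht _ hab _ hab'
  · have h1 : ∀ x y : Ω, {c | (x, c) ∈ r ∧ (c, y) ∈ u ∧ (c, y) ∈ compES X s} =
        (∅ : Set Ω) := by
      intro x y
      rw [Set.eq_empty_iff_forall_notMem]
      rintro c ⟨-, h2, h3⟩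
      exact hsub (compES_basis hs hu h2 h3)
    rw [h1, h1]

/-- Invariance of quotient intersection numbers. -/
private lemma quot_interNum_eq {r s t : Set (Ω × Ω)} (hr : r ∈ X.S) (hs : s ∈ X.S)
    (ht : t ∈ X.S) {a b a' b' : Ω} (hab : (a, b) ∈ t) (hab' : (a', b') ∈ t) :
    interNum (imgRel X r) (imgRel X s) (qm X a, qm X b) =
      interNum (imgRel X r) (imgRel X s) (qm X a', qm X b') := by
  classical
  have hQfin : Finite (Quot (XTwin X)) := inferInstance
  set C : Ω → Ω → Set Ω := fun x y => {c | (x, c) ∈ r ∧ (c, y) ∈ compES X s} with hC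
  have hset : ∀ x y : Ω,
      {γ : Quot (XTwin X) | ((qm X x, qm X y).1, γ) ∈ imgRel X r ∧
        (γ, (qm X x, qm X y).2) ∈ imgRel X s} = qm X '' C x y :=
    fun x y => quot_interNum_set hnt hr hs x y
  have hCcard : (C a b).ncard = (C a' b').ncard := quot_C_ncard hnt hr hs ht hab hab'
  rcases Classical.em (∃ z : Ω, (z, z) ∈ r) with ⟨z, hz⟩ | hoff
  · -- diagonal case : C x y ⊆ {x}
    have hsub : ∀ x y : Ω, C x y ⊆ {x} := by
      intro x y c hc
      have := X.diag_of_mem_diag hr hz (x, c) hc.1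
      exact (show x = c from this).symm
    rw [interNum, interNum, hset a b, hset a' b',
      Set.ncard_image_of_injOn (fun c hc d hd _ => by
        rw [hsub a b hc, hsub a b hd]),
      Set.ncard_image_of_injOn (fun c hc d hd _ => by
        rw [hsub a' b' hc, hsub a' b' hd])]
    exact hCcard
  · -- off-diagonal case
    push_neg at hoff
    have hro : ∀ p ∈ r, p.1 ≠ p.2 := by
      rintro ⟨x, y⟩ hp h
      exact hoff x (by rw [show x = y from h] at hp ⊢; exact hp)
    -- codomain fiber of r and the common class size
    obtain ⟨⟨x₀, y₀⟩, hxy₀⟩ := X.basis_nonempty hr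
    obtain ⟨Δ₂, hΔ₂, hy₀⟩ := X.exists_fiber y₀
    have hcod : ∀ p ∈ r, p.2 ∈ Δ₂ := by
      rintro ⟨x, y⟩ hp
      exact (X.dom_fiber (X.star_mem hr) (mem_star.mpr hxy₀) hΔ₂ hy₀).1 (y, x)
        (mem_star.mpr hp)
    set k := (twinCls X y₀).ncard with hk
    have hkpos : k ≠ 0 := by
      rw [hk]
      intro h
      rw [Set.ncard_eq_zero (Set.toFinite _)] at h
      have h2 : y₀ ∈ twinCls X y₀ := xtwin_refl y₀
      rw [h] at h2
      exact h2
    have hcls : ∀ x y : Ω, ∀ γ ∈ qm X '' C x y, {z : Ω | qm X z = γ}.ncard = k := by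
      rintro x y γ ⟨c, hc, rfl⟩
      have hcΔ : c ∈ Δ₂ := hcod (x, c) hc.1
      have h1 : {z : Ω | qm X z = qm X c} = twinCls X c := by
        ext z
        rw [Set.mem_setOf_eq, qm_eq_iff, twinCls, Set.mem_setOf_eq]
        exact ⟨fun h => xtwin_symm h, fun h => xtwin_symm h⟩
      rw [h1, hk]
      exact twinCls_ncard_const hΔ₂ hcΔ hy₀
    -- saturation decomposition
    have hsat : ∀ x y : Ω, (x, y) ∈ t →
        qm X ⁻¹' (qm X '' C x y) = C x y ∪ (qm X ⁻¹' (qm X '' C x y) ∩ {x}) := by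
      intro x y hxyt
      apply Set.Subset.antisymm
      · intro c' hc'
        obtain ⟨c, hc, hqc⟩ := hc'
        have htcc' : XTwin X c c' := qm_eq_iff.mp hqc
        rcases Classical.em (c' = x) with rfl | hne
        · exact Or.inr ⟨⟨c, hc, hqc⟩, rfl⟩
        · left
          have hxc : x ≠ c := fun h => hro (x, c) hc.1 h
          refine ⟨(htcc' x hxc (Ne.symm hne) r hr).mp hc.1, ?_⟩
          obtain ⟨d, hd1, hd2⟩ := hc.2
          exact ⟨d, xtwin_trans (xtwin_symm htcc') hd1, hd2⟩
      · intro c' hc'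
        rcases hc' with hc' | hc'
        · exact ⟨c', hc', rfl⟩
        · exact hc'.1
    -- the indicator sets
    have hind : ∀ x y : Ω, qm X ⁻¹' (qm X '' C x y) ∩ {x} =
        {x} ∩ {z | ∃ c ∈ C x y, XTwin X c x} := by
      intro x y
      ext z
      simp only [Set.mem_inter_iff, Set.mem_preimage, Set.mem_image, Set.mem_singleton_iff,
        Set.mem_setOf_eq]
      constructor
      · rintro ⟨⟨c, hc, hqc⟩, rfl⟩
        exact ⟨rfl, c, hc, qm_eq_iff.mp hqc⟩
      · rintro ⟨rfl, c, hc, htw⟩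
        exact ⟨⟨c, hc, (qm_eq_iff.mpr htw)⟩, rfl⟩
    have hindcard : (qm X ⁻¹' (qm X '' C a b) ∩ {a}).ncard =
        (qm X ⁻¹' (qm X '' C a' b') ∩ {a'}).ncard := by
      rw [hind a b, hind a' b']
      apply ncard_subsingleton_eq (x := a) (y := a')
        (Set.inter_subset_left)
        (Set.inter_subset_left)
      rcases Classical.em (∀ p ∈ r, XTwin X p.1 p.2) with htwr | hntwr
      · -- twin case: indicator ↔ C nonempty
        have hiff : ∀ x y : Ω, ({x} ∩ {z | ∃ c ∈ C x y, XTwin X c x}).Nonempty ↔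
            (C x y).Nonempty := by
          intro x y
          constructor
          · rintro ⟨z, -, c, hc, -⟩
            exact ⟨c, hc⟩
          · rintro ⟨c, hc⟩
            exact ⟨x, rfl, c, hc, xtwin_symm (htwr (x, c) hc.1)⟩
        have hnn : ∀ A : Set Ω, A.Nonempty ↔ A.ncard ≠ 0 := by
          intro A
          rw [ne_eq, Set.ncard_eq_zero (Set.toFinite _)]
          exact Set.nonempty_iff_ne_empty
        rw [hiff, hiff, hnn, hnn, hCcard]
      · -- no twin pairs in r: both indicators empty
        have hiff : ∀ x y : Ω, ¬ ({x} ∩ {z | ∃ c ∈ C x y, XTwin X c x}).Nonempty := by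
          intro x y
          rintro ⟨z, -, c, hc, htw⟩
          exact hntwr (fun p hp => xtwin_parabolic hr hc.1 (xtwin_symm htw) hp)
        rw [iff_of_false (hiff a b) (hiff a' b')]
    -- assemble
    have hcount : ∀ x y : Ω, (x, y) ∈ t →
        k * (qm X '' C x y).ncard = (C x y).ncard +
          (qm X ⁻¹' (qm X '' C x y) ∩ {x}).ncard := by
      intro x y hxyt
      have h1 : (qm X ⁻¹' (qm X '' C x y)).ncard = k * (qm X '' C x y).ncard :=
        ncard_preimage_eq (qm X) (qm X '' C x y) k (hcls x y)
      have hdisjCU : Disjoint (C x y) (qm X ⁻¹' (qm X '' C x y) ∩ {x}) := by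
        rw [Set.disjoint_left]
        rintro c hc ⟨-, hcx⟩
        rw [Set.mem_singleton_iff] at hcx
        exact hro (x, c) hc.1 (by rw [hcx])
      conv_lhs => rw [← h1, hsat x y hxyt]
      rw [Set.ncard_union_eq hdisjCU (Set.toFinite _) (Set.toFinite _)]
    have e1 := hcount a b hab
    have e2 := hcount a' b' hab'
    rw [interNum, interNum, hset a b, hset a' b']
    apply Nat.eq_of_mul_eq_mul_left (Nat.pos_of_ne_zero hkpos)
    rw [e1, e2, hCcard, hindcard]

end QuotCC

section MoreCC
namespace CoherentConfiguration
variable {κ : Type v} (Y : CoherentConfiguration κ)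

lemma mem_invariance {t t' : Set (κ × κ)} (ht : t ∈ Y.S) (ht' : t' ∈ Y.S)
    {p p' : κ × κ} (hp : p ∈ t) (hp' : p' ∈ t) : p ∈ t' ↔ p' ∈ t' := by
  constructor
  · intro h
    rwa [Y.basis_eq ht' ht h hp]
  · intro h
    rwa [Y.basis_eq ht' ht h hp']

variable [Finite κ]

lemma diag_pt_invariance {t₃ t₁ : Set (κ × κ)} (ht₃ : t₃ ∈ Y.S) {c d c' d' : κ}
    (h1 : (c, d) ∈ t₃) (h2 : (c', d') ∈ t₃) (ht₁ : t₁ ∈ Y.S) :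
    (c, c) ∈ t₁ ↔ (c', c') ∈ t₁ := by
  obtain ⟨Φ, hΦ, hc⟩ := Y.exists_fiber c
  have hc' : c' ∈ Φ := (Y.dom_fiber ht₃ h1 hΦ hc).1 (c', d') h2
  constructor
  · intro h
    rw [Y.basis_eq ht₁ hΦ h ⟨rfl, hc⟩]
    exact ⟨rfl, hc'⟩
  · intro h
    rw [Y.basis_eq ht₁ hΦ h ⟨rfl, hc'⟩]
    exact ⟨rfl, hc⟩

end CoherentConfiguration

open Classical in
lemma single_inter_ncard {γ : Type*} (C : Set γ) (u : γ) :
    (C ∩ {u}).ncard = if u ∈ C then 1 else 0 := by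
  by_cases hu : u ∈ C
  · rw [if_pos hu]
    have h : C ∩ {u} = {u} := by
      ext z
      simp only [Set.mem_inter_iff, Set.mem_singleton_iff]
      exact ⟨fun h => h.2, fun h => ⟨h ▸ hu, h⟩⟩
    rw [h, Set.ncard_singleton]
  · rw [if_neg hu]
    have h : C ∩ {u} = ∅ := by
      ext z
      simp only [Set.mem_inter_iff, Set.mem_singleton_iff, Set.mem_empty_iff_false, iff_false,
        not_and]
      rintro hz rfl
      exact hu hz
    rw [h, Set.ncard_empty]

open Classical in
lemma diff_single_inter_ncard {γ : Type*} (C : Set γ) (u v : γ) :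
    (C ∩ ({v} \ {u})).ncard = if v ∈ C ∧ v ≠ u then 1 else 0 := by
  by_cases hvu : v = u
  · rw [if_neg (by rintro ⟨-, h⟩; exact h hvu)]
    have h : ({v} : Set γ) \ {u} = ∅ := by
      rw [hvu]; simp
    rw [h, Set.inter_empty, Set.ncard_empty]
  · have h : ({v} : Set γ) \ {u} = {v} := by
      ext z
      simp only [Set.mem_diff, Set.mem_singleton_iff]
      exact ⟨fun h => h.1, fun h => ⟨h, fun hh => hvu (h ▸ hh ▸ rfl)⟩⟩
    rw [h, single_inter_ncard]
    by_cases hv : v ∈ C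
    · rw [if_pos hv, if_pos ⟨hv, hvu⟩]
    · rw [if_neg hv, if_neg (by rintro ⟨h1, -⟩; exact hv h1)]

lemma inter_pair_split {γ : Type*} (C : Set γ) (u v : γ) : C ∩ {u, v} =
    (C ∩ {u}) ∪ (C ∩ ({v} \ {u})) := by
  ext z
  simp only [Set.mem_inter_iff, Set.mem_insert_iff, Set.mem_singleton_iff, Set.mem_union,
    Set.mem_diff]
  tauto

lemma inter_pair_disj {γ : Type*} (C : Set γ) (u v : γ) :
    Disjoint (C ∩ {u}) (C ∩ ({v} \ {u})) := by
  rw [Set.disjoint_left]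
  rintro z ⟨-, hz⟩ ⟨-, -, hz'⟩
  exact hz' hz

open Classical in
lemma pair_inter_ncard {α β : Type*} [Finite α] [Finite β] {B : Set α} {B' : Set β}
    {x y : α} {x' y' : β} (h1 : x ∈ B ↔ x' ∈ B') (h2 : y ∈ B ↔ y' ∈ B')
    (h3 : x = y ↔ x' = y') : (B ∩ {x, y}).ncard = (B' ∩ {x', y'}).ncard := by
  rw [inter_pair_split B x y, inter_pair_split B' x' y',
    Set.ncard_union_eq (inter_pair_disj _ _ _) (Set.toFinite _) (Set.toFinite _),
    Set.ncard_union_eq (inter_pair_disj _ _ _) (Set.toFinite _) (Set.toFinite _),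
    single_inter_ncard, single_inter_ncard, diff_single_inter_ncard, diff_single_inter_ncard]
  congr 1
  · by_cases hx : x ∈ B
    · rw [if_pos hx, if_pos (h1.mp hx)]
    · rw [if_neg hx, if_neg (fun h => hx (h1.mpr h))]
  · have h4 : (y ∈ B ∧ y ≠ x) ↔ (y' ∈ B' ∧ y' ≠ x') := by
      constructor
      · rintro ⟨ha, hb⟩
        exact ⟨h2.mp ha, fun h => hb (((show y' = x' ↔ y = x from
          ⟨fun hh => (h3.mpr hh.symm).symm, fun hh => (h3.mp hh.symm).symm⟩).mp h))⟩
      · rintro ⟨ha, hb⟩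
        exact ⟨h2.mpr ha, fun h => hb ((h3.mp h.symm).symm)⟩
    by_cases hy : y ∈ B ∧ y ≠ x
    · rw [if_pos hy, if_pos (h4.mp hy)]
    · rw [if_neg hy, if_neg (fun h => hy (h4.mpr h))]

end MoreCC

section QuotCCDef
open CoherentConfiguration Classical
variable {Ω : Type u} [Finite Ω]

lemma imgRel_diagRel (X : CoherentConfiguration Ω) (Δ : Set Ω) :
    imgRel X (diagRel Δ) = diagRel (qm X '' Δ) := by
  ext ⟨c, d⟩
  rw [mem_imgRel, mem_diagRel]
  constructor
  · rintro ⟨x, y, ⟨heq, hx⟩, h1, h2⟩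
    have : x = y := heq
    subst this
    exact ⟨h1.symm.trans h2, h1 ▸ ⟨x, hx, rfl⟩⟩
  · rintro ⟨rfl, x, hx, hqx⟩
    exact ⟨x, x, ⟨rfl, hx⟩, hqx, hqx⟩

/-- The quotient coherent configuration `X/e`. -/
noncomputable def quotCC (X : CoherentConfiguration Ω)
    (hnt : ¬ ∀ x y : Ω, XTwin X x y) : CoherentConfiguration (Quot (XTwin X)) where
  S := (fun s => imgRel X s) '' X.S
  isPartition := by
    constructor
    · rintro ⟨s, hs, hemp⟩
      obtain ⟨p, hp⟩ := X.basis_nonempty hs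
      have h2 : Prod.map (qm X) (qm X) p ∈ imgRel X s := Set.mem_image_of_mem _ hp
      rw [show imgRel X s = ∅ from hemp] at h2
      exact h2
    · rintro ⟨c, d⟩
      obtain ⟨x, hx⟩ := Quot.exists_rep c
      obtain ⟨y, hy⟩ := Quot.exists_rep d
      obtain ⟨s, hs, hm⟩ := X.exists_basis (x, y)
      refine ⟨imgRel X s, ⟨⟨s, hs, rfl⟩, ?_⟩, ?_⟩
      · exact mem_imgRel.mpr ⟨x, y, hm, hx, hy⟩
      · rintro b' ⟨⟨s', hs', rfl⟩, hp'⟩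
        exact imgRel_eq_of_inter hnt hs' hs
          ⟨(c, d), hp', mem_imgRel.mpr ⟨x, y, hm, hx, hy⟩⟩
  diag_isRelation := by
    refine ⟨(fun s => imgRel X s) '' {s | s ∈ X.S ∧ ∀ p ∈ s, XTwin X p.1 p.2}, ?_, ?_⟩
    · rintro b ⟨s, ⟨hs, -⟩, rfl⟩
      exact ⟨s, hs, rfl⟩
    · ext ⟨c, d⟩
      rw [mem_diagRel]
      constructor
      · rintro ⟨b, ⟨s, ⟨hs, htw⟩, rfl⟩, hm⟩
        obtain ⟨x, y, hxy, h1, h2⟩ := mem_imgRel.mp hm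
        refine ⟨?_, trivial⟩
        rw [← h1, ← h2]
        exact qm_eq_iff.mpr (htw (x, y) hxy)
      · rintro ⟨rfl, -⟩
        obtain ⟨x, hx⟩ := Quot.exists_rep c
        obtain ⟨s, hs, hm⟩ := X.exists_basis (x, x)
        refine ⟨imgRel X s, ⟨s, ⟨hs, fun p hp =>
          xtwin_parabolic hs hm (xtwin_refl x) hp⟩, rfl⟩, ?_⟩
        exact mem_imgRel.mpr ⟨x, x, hm, hx, hx⟩
  swap_mem := by
    rintro b ⟨s, hs, rfl⟩
    refine ⟨star s, X.star_mem hs, ?_⟩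
    exact imgRel_star
  coherent := by
    rintro rr ⟨r, hr, rfl⟩ ss ⟨s, hs, rfl⟩ tt ⟨t, ht, rfl⟩ p hp p' hp'
    obtain ⟨⟨a, b⟩, hab, rfl⟩ := hp
    obtain ⟨⟨a', b'⟩, hab', rfl⟩ := hp'
    exact quot_interNum_eq hnt hr hs ht hab hab'

variable {X : CoherentConfiguration Ω} (hnt : ¬ ∀ x y : Ω, XTwin X x y)

lemma quotCC_S : (quotCC X hnt).S = (fun s => imgRel X s) '' X.S := rfl

include hnt in
/-- The quotient graph's arc set is a relation of the quotient configuration. -/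
lemma quotCC_isRel_adj {G : SimpleGraph Ω} (hGrel : X.IsRelation (adjRel G)) :
    (quotCC X hnt).IsRelation (adjRel (quotGraph G (XTwin X))) := by
  obtain ⟨T, hT, hTe⟩ := hGrel
  refine ⟨(fun s => imgRel X s) '' {s | s ∈ T ∧ ∀ p ∈ s, ¬ XTwin X p.1 p.2}, ?_, ?_⟩
  · rintro b ⟨s, ⟨hsT, -⟩, rfl⟩
    exact ⟨s, hT hsT, rfl⟩
  · have hadj : ∀ x y : Ω, G.Adj x y ↔ ∃ t ∈ T, (x, y) ∈ t := by
      intro x y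
      rw [show (G.Adj x y) ↔ (x, y) ∈ adjRel G from Iff.rfl, ← hTe]
      exact Set.mem_sUnion
    ext ⟨c, d⟩
    constructor
    · rintro ⟨b, ⟨s, ⟨hsT, hnotw⟩, rfl⟩, hm⟩
      obtain ⟨x, y, hxy, h1, h2⟩ := mem_imgRel.mp hm
      have hs : s ∈ X.S := hT hsT
      have hAxy : G.Adj x y := (hadj x y).mpr ⟨s, hsT, hxy⟩
      have hcd : c ≠ d := by
        rintro rfl
        exact hnotw (x, y) hxy (qm_eq_iff.mp (h1.trans h2.symm))
      refine ⟨hcd, ?_⟩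
      intro a b ha hb
      have htwxa : XTwin X x a := qm_eq_iff.mp (h1.trans ha.symm ▸ rfl : qm X x = qm X a)
      have htwyb : XTwin X y b := qm_eq_iff.mp (h2.trans hb.symm ▸ rfl : qm X y = qm X b)
      have hItw_yb : IsTwin G y b := xtwin_isTwin ⟨T, hT, hTe⟩ htwyb
      have hItw_xa : IsTwin G x a := xtwin_isTwin ⟨T, hT, hTe⟩ htwxa
      have hxb : G.Adj x b := by
        rcases Classical.em (y = b) with rfl | hne
        · exact hAxy
        · have hx_ne_y : x ≠ y := G.ne_of_adj hAxy
          have hx_ne_b : x ≠ b := by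
            rintro rfl
            exact hcd (h1.symm.trans hb)
          exact (hItw_yb x hx_ne_y hx_ne_b).mp hAxy
      rcases Classical.em (x = a) with rfl | hne
      · exact hxb
      · have hb_ne_x : b ≠ x := (G.ne_of_adj hxb).symm
        have hb_ne_a : b ≠ a := by
          rintro rfl
          exact hcd (ha.symm.trans hb)
        exact ((hItw_xa b hb_ne_x hb_ne_a).mp hxb.symm).symm
    · rintro ⟨hcd, hAdj⟩
      obtain ⟨x, hx⟩ := Quot.exists_rep c
      obtain ⟨y, hy⟩ := Quot.exists_rep d
      have hAxy : G.Adj x y := hAdj x y hx hy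
      obtain ⟨s, hsT, hxys⟩ := (hadj x y).mp hAxy
      refine ⟨imgRel X s, ⟨s, ⟨hsT, ?_⟩, rfl⟩, mem_imgRel.mpr ⟨x, y, hxys, hx, hy⟩⟩
      intro p hp htwp
      apply hcd
      rw [← hx, ← hy]
      exact qm_eq_iff.mpr (xtwin_parabolic (hT hsT) hp htwp hxys)

/-- Quotient fibers are relations of the quotient configuration. -/
lemma quotCC_isRel_fiber {Δ : Set Ω} (hΔ : diagRel Δ ∈ X.S) :
    (quotCC X hnt).IsRelation (diagRel (qm X '' Δ)) := by
  refine ⟨{imgRel X (diagRel Δ)}, ?_, ?_⟩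
  · rintro b hb
    rw [Set.mem_singleton_iff] at hb
    exact hb ▸ ⟨diagRel Δ, hΔ, rfl⟩
  · rw [Set.sUnion_singleton, imgRel_diagRel]

end QuotCCDef

section ZCC
open CoherentConfiguration Classical
variable {Ω : Type u} [Finite Ω] {X : CoherentConfiguration Ω}

/-- Preimage of a quotient relation. -/
def preQ (X : CoherentConfiguration Ω) (t : Set (Quot (XTwin X) × Quot (XTwin X))) :
    Set (Ω × Ω) := {p | (qm X p.1, qm X p.2) ∈ t}

variable {Y : CoherentConfiguration (Quot (XTwin X))}

private lemma ZCC_coherent_aux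
    (hfib : ∀ Φ : Set (Quot (XTwin X)), diagRel Φ ∈ Y.S →
      ∃ Δ : Set Ω, diagRel Δ ∈ X.S ∧ Φ ⊆ qm X '' Δ)
    {t₁ t₂ t₃ : Set (Quot (XTwin X) × Quot (XTwin X))}
    (ht₁ : t₁ ∈ Y.S) (ht₂ : t₂ ∈ Y.S) (ht₃ : t₃ ∈ Y.S)
    {z₁ z₂ : Set (Ω × Ω)}
    (hf₁ : z₁ = preQ X t₁ ∩ {p : Ω × Ω | p.1 = p.2} ∨
      z₁ = preQ X t₁ ∩ {p : Ω × Ω | p.1 ≠ p.2})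
    (hf₂ : z₂ = preQ X t₂ ∩ {p : Ω × Ω | p.1 = p.2} ∨
      z₂ = preQ X t₂ ∩ {p : Ω × Ω | p.1 ≠ p.2})
    {p p' : Ω × Ω} (hp3 : (qm X p.1, qm X p.2) ∈ t₃) (hp3' : (qm X p'.1, qm X p'.2) ∈ t₃)
    (hdd : p.1 = p.2 ↔ p'.1 = p'.2) :
    interNum z₁ z₂ p = interNum z₁ z₂ p' := by
  have inv_ld : (qm X p.1, qm X p.1) ∈ t₁ ↔ (qm X p'.1, qm X p'.1) ∈ t₁ :=
    Y.diag_pt_invariance ht₃ hp3 hp3' ht₁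
  have inv_rd₂ : (qm X p.2, qm X p.2) ∈ t₂ ↔ (qm X p'.2, qm X p'.2) ∈ t₂ :=
    Y.diag_pt_invariance (Y.star_mem ht₃) (mem_star.mpr hp3) (mem_star.mpr hp3') ht₂
  have inv_m₁ : (qm X p.1, qm X p.2) ∈ t₁ ↔ (qm X p'.1, qm X p'.2) ∈ t₁ :=
    Y.mem_invariance ht₃ ht₁ hp3 hp3'
  have inv_m₂ : (qm X p.1, qm X p.2) ∈ t₂ ↔ (qm X p'.1, qm X p'.2) ∈ t₂ :=
    Y.mem_invariance ht₃ ht₂ hp3 hp3'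
  have invz₂ : (p.1, p.2) ∈ z₂ ↔ (p'.1, p'.2) ∈ z₂ := by
    rcases hf₂ with rfl | rfl
    · exact ⟨fun ⟨h1, h2⟩ => ⟨inv_m₂.mp h1, hdd.mp h2⟩,
        fun ⟨h1, h2⟩ => ⟨inv_m₂.mpr h1, hdd.mpr h2⟩⟩
    · exact ⟨fun ⟨h1, h2⟩ => ⟨inv_m₂.mp h1, fun h => h2 (hdd.mpr h)⟩,
        fun ⟨h1, h2⟩ => ⟨inv_m₂.mpr h1, fun h => h2 (hdd.mp h)⟩⟩
  have invz₁ : (p.1, p.2) ∈ z₁ ↔ (p'.1, p'.2) ∈ z₁ := by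
    rcases hf₁ with rfl | rfl
    · exact ⟨fun ⟨h1, h2⟩ => ⟨inv_m₁.mp h1, hdd.mp h2⟩,
        fun ⟨h1, h2⟩ => ⟨inv_m₁.mpr h1, hdd.mpr h2⟩⟩
    · exact ⟨fun ⟨h1, h2⟩ => ⟨inv_m₁.mp h1, fun h => h2 (hdd.mpr h)⟩,
        fun ⟨h1, h2⟩ => ⟨inv_m₁.mpr h1, fun h => h2 (hdd.mp h)⟩⟩
  rcases hf₁ with rfl | rfl
  · -- z₁ is diagonal: the count set is contained in {p.1}
    rw [interNum, interNum]
    have char : ∀ w : Ω × Ω,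
        ({γ : Ω | (w.1, γ) ∈ preQ X t₁ ∩ {p : Ω × Ω | p.1 = p.2} ∧ (γ, w.2) ∈ z₂}.Nonempty ↔
          ((qm X w.1, qm X w.1) ∈ t₁ ∧ (w.1, w.2) ∈ z₂)) := by
      intro w
      constructor
      · rintro ⟨γ, ⟨hγ1, hγ2⟩, hγ3⟩
        have hγw : γ = w.1 := (show w.1 = γ from hγ2).symm
        subst hγw
        exact ⟨hγ1, hγ3⟩
      · rintro ⟨h1, h2⟩
        exact ⟨w.1, ⟨h1, rfl⟩, h2⟩
    apply ncard_subsingleton_eq (x := p.1) (y := p'.1)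
    · rintro γ ⟨⟨-, h2⟩, -⟩
      exact (show p.1 = γ from h2).symm
    · rintro γ ⟨⟨-, h2⟩, -⟩
      exact (show p'.1 = γ from h2).symm
    · exact (char p).trans ((and_congr inv_ld invz₂).trans (char p').symm)
  rcases hf₂ with rfl | rfl
  · -- z₂ is diagonal: the count set is contained in {p.2}
    rw [interNum, interNum]
    have char : ∀ w : Ω × Ω,
        ({γ : Ω | (w.1, γ) ∈ preQ X t₁ ∩ {p : Ω × Ω | p.1 ≠ p.2} ∧
          (γ, w.2) ∈ preQ X t₂ ∩ {p : Ω × Ω | p.1 = p.2}}.Nonempty ↔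
          ((w.1, w.2) ∈ preQ X t₁ ∩ {p : Ω × Ω | p.1 ≠ p.2} ∧
            (qm X w.2, qm X w.2) ∈ t₂)) := by
      intro w
      constructor
      · rintro ⟨γ, ⟨hγ1, hγ2⟩, hγ3, hγ4⟩
        have hγw : γ = w.2 := hγ4
        subst hγw
        exact ⟨⟨hγ1, hγ2⟩, hγ3⟩
      · rintro ⟨⟨h1, h2⟩, h3⟩
        exact ⟨w.2, ⟨h1, h2⟩, h3, rfl⟩
    apply ncard_subsingleton_eq (x := p.2) (y := p'.2)
    · rintro γ ⟨-, -, h4⟩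
      exact h4
    · rintro γ ⟨-, -, h4⟩
      exact h4
    · exact (char p).trans ((and_congr invz₁ inv_rd₂).trans (char p').symm)
  · -- both off-diagonal: the main counting argument
    have hQfin : Finite (Quot (XTwin X)) := inferInstance
    set Abar : Ω × Ω → Set (Quot (XTwin X)) :=
      fun w => {γ | (qm X w.1, γ) ∈ t₁ ∧ (γ, qm X w.2) ∈ t₂} with hAbar
    set B : Ω × Ω → Set Ω := fun w => qm X ⁻¹' (Abar w) with hB
    -- the count set is B w minus the two endpoints
    have hAset : ∀ w : Ω × Ω,
        {γ : Ω | (w.1, γ) ∈ preQ X t₁ ∩ {p : Ω × Ω | p.1 ≠ p.2} ∧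
          (γ, w.2) ∈ preQ X t₂ ∩ {p : Ω × Ω | p.1 ≠ p.2}} = B w \ {w.1, w.2} := by
      intro w
      ext γ
      simp only [Set.mem_setOf_eq, Set.mem_inter_iff, Set.mem_diff, Set.mem_insert_iff,
        Set.mem_singleton_iff, hB, Set.mem_preimage, hAbar]
      constructor
      · rintro ⟨⟨h1, h2⟩, h3, h4⟩
        exact ⟨⟨h1, h3⟩, by
          rintro (rfl | rfl)
          · exact h2 rfl
          · exact h4 rfl⟩
      · rintro ⟨⟨h1, h3⟩, h5⟩
        refine ⟨⟨h1, ?_⟩, h3, ?_⟩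
        · intro hh
          exact h5 (Or.inl (show γ = w.1 from hh.symm))
        · intro hh
          exact h5 (Or.inr (show γ = w.2 from hh))
    -- class size over the codomain fiber of t₁
    obtain ⟨⟨c₀, d₀⟩, ht₁w⟩ := Y.basis_nonempty ht₁
    obtain ⟨Φ₂, hΦ₂, hd₀⟩ := Y.exists_fiber d₀
    have hcod : ∀ pp ∈ t₁, pp.2 ∈ Φ₂ := by
      rintro ⟨cc, dd⟩ hpp
      exact (Y.dom_fiber (Y.star_mem ht₁) (mem_star.mpr ht₁w) hΦ₂ hd₀).1 (dd, cc)
        (mem_star.mpr hpp)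
    obtain ⟨Δ₂, hΔ₂X, hΦsub⟩ := hfib Φ₂ hΦ₂
    obtain ⟨w₀, hw₀Δ, hw₀q⟩ := hΦsub hd₀
    set k := (twinCls X w₀).ncard with hk
    have hcls : ∀ gb ∈ Φ₂, {z : Ω | qm X z = gb}.ncard = k := by
      intro gb hgb
      obtain ⟨w, hw, rfl⟩ := hΦsub hgb
      have h1 : {z : Ω | qm X z = qm X w} = twinCls X w := by
        ext z
        rw [Set.mem_setOf_eq, qm_eq_iff, twinCls, Set.mem_setOf_eq]
        exact ⟨fun h => xtwin_symm h, fun h => xtwin_symm h⟩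
      rw [h1, hk]
      exact twinCls_ncard_const hΔ₂X hw hw₀Δ
    have hBcount : ∀ w : Ω × Ω, (B w).ncard = k * (Abar w).ncard := by
      intro w
      exact ncard_preimage_eq (qm X) (Abar w) k
        (fun gb hgb => hcls gb (hcod (qm X w.1, gb) hgb.1))
    have hAbarcard : (Abar p).ncard = (Abar p').ncard :=
      Y.coherent _ ht₁ _ ht₂ _ ht₃ _ hp3 _ hp3'
    -- corrections
    have hc1 : p.1 ∈ B p ↔ p'.1 ∈ B p' := by
      simp only [hB, Set.mem_preimage, hAbar, Set.mem_setOf_eq]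
      exact and_congr inv_ld inv_m₂
    have hc2 : p.2 ∈ B p ↔ p'.2 ∈ B p' := by
      simp only [hB, Set.mem_preimage, hAbar, Set.mem_setOf_eq]
      exact and_congr inv_m₁ inv_rd₂
    have hcor : (B p ∩ {p.1, p.2}).ncard = (B p' ∩ {p'.1, p'.2}).ncard :=
      pair_inter_ncard hc1 hc2 hdd
    -- assemble
    have hsplit : ∀ w : Ω × Ω, (B w \ {w.1, w.2}).ncard + (B w ∩ {w.1, w.2}).ncard =
        (B w).ncard := by
      intro w
      conv_rhs => rw [← Set.diff_union_inter (B w) {w.1, w.2}]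
      rw [Set.ncard_union_eq Set.disjoint_sdiff_inter (Set.toFinite _) (Set.toFinite _)]
    have e1 := hsplit p
    have e2 := hsplit p'
    rw [hBcount p, hAbarcard] at e1
    rw [hBcount p'] at e2
    rw [interNum, interNum, hAset p, hAset p']
    omega

/-- The pullback configuration on `Ω` obtained from `Y`. -/
noncomputable def ZCC (X : CoherentConfiguration Ω)
    (Y : CoherentConfiguration (Quot (XTwin X)))
    (hfib : ∀ Φ : Set (Quot (XTwin X)), diagRel Φ ∈ Y.S →
      ∃ Δ : Set Ω, diagRel Δ ∈ X.S ∧ Φ ⊆ qm X '' Δ) : CoherentConfiguration Ω where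
  S := {z | z.Nonempty ∧ ∃ t ∈ Y.S, z = preQ X t ∩ {p : Ω × Ω | p.1 = p.2} ∨
    z = preQ X t ∩ {p : Ω × Ω | p.1 ≠ p.2}}
  isPartition := by
    constructor
    · rintro ⟨hne, -⟩
      exact Set.not_nonempty_empty hne
    · intro p
      obtain ⟨t, ht, hm⟩ := Y.exists_basis (qm X p.1, qm X p.2)
      by_cases hd : p.1 = p.2
      · refine ⟨preQ X t ∩ {p : Ω × Ω | p.1 = p.2},
          ⟨⟨⟨p, hm, hd⟩, t, ht, Or.inl rfl⟩, hm, hd⟩, ?_⟩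
        rintro z' ⟨⟨-, t', ht', (rfl | rfl)⟩, hp'⟩
        · rw [Y.basis_eq ht' ht hp'.1 hm]
        · exact absurd hd hp'.2
      · refine ⟨preQ X t ∩ {p : Ω × Ω | p.1 ≠ p.2},
          ⟨⟨⟨p, hm, hd⟩, t, ht, Or.inr rfl⟩, hm, hd⟩, ?_⟩
        rintro z' ⟨⟨-, t', ht', (rfl | rfl)⟩, hp'⟩
        · exact absurd hp'.2 hd
        · rw [Y.basis_eq ht' ht hp'.1 hm]
  diag_isRelation := by
    refine ⟨{z | (z.Nonempty ∧ ∃ t ∈ Y.S, z = preQ X t ∩ {p : Ω × Ω | p.1 = p.2} ∨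
      z = preQ X t ∩ {p : Ω × Ω | p.1 ≠ p.2}) ∧ z ⊆ {p : Ω × Ω | p.1 = p.2}}, ?_, ?_⟩
    · rintro z ⟨hz, -⟩
      exact hz
    · ext p
      rw [diag_univ]
      constructor
      · rintro ⟨z, ⟨-, hsub⟩, hp⟩
        exact hsub hp
      · intro hp
        obtain ⟨t, ht, hm⟩ := Y.exists_basis (qm X p.1, qm X p.2)
        refine ⟨preQ X t ∩ {p : Ω × Ω | p.1 = p.2},
          ⟨⟨⟨p, hm, hp⟩, t, ht, Or.inl rfl⟩, fun q hq => hq.2⟩, hm, hp⟩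
  swap_mem := by
    rintro z ⟨hne, t, ht, (rfl | rfl)⟩
    · refine ⟨?_, {q | (q.2, q.1) ∈ t}, Y.swap_mem t ht, Or.inl ?_⟩
      · obtain ⟨p, hp⟩ := hne
        exact ⟨(p.2, p.1), hp⟩
      · ext ⟨u, v⟩
        simp only [Set.mem_setOf_eq, Set.mem_inter_iff, preQ]
        exact ⟨fun ⟨h1, h2⟩ => ⟨h1, (show v = u from h2).symm⟩,
          fun ⟨h1, h2⟩ => ⟨h1, (show u = v from h2).symm⟩⟩
    · refine ⟨?_, {q | (q.2, q.1) ∈ t}, Y.swap_mem t ht, Or.inr ?_⟩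
      · obtain ⟨p, hp⟩ := hne
        exact ⟨(p.2, p.1), hp⟩
      · ext ⟨u, v⟩
        simp only [Set.mem_setOf_eq, Set.mem_inter_iff, preQ]
        exact ⟨fun ⟨h1, h2⟩ => ⟨h1, fun h => h2 h.symm⟩,
          fun ⟨h1, h2⟩ => ⟨h1, fun h => h2 h.symm⟩⟩
  coherent := by
    rintro z₁ ⟨-, t₁, ht₁, hf₁⟩ z₂ ⟨-, t₂, ht₂, hf₂⟩ z₃ ⟨-, t₃, ht₃, hf₃⟩ p hp p' hp'
    have hp3 : (qm X p.1, qm X p.2) ∈ t₃ := by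
      rcases hf₃ with rfl | rfl
      · exact hp.1
      · exact hp.1
    have hp3' : (qm X p'.1, qm X p'.2) ∈ t₃ := by
      rcases hf₃ with rfl | rfl
      · exact hp'.1
      · exact hp'.1
    have hdd : p.1 = p.2 ↔ p'.1 = p'.2 := by
      rcases hf₃ with rfl | rfl
      · exact iff_of_true hp.2 hp'.2
      · exact iff_of_false hp.2 hp'.2
    exact ZCC_coherent_aux hfib ht₁ ht₂ ht₃ hf₁ hf₂ hp3 hp3' hdd

end ZCC

section Final
open CoherentConfiguration Classical
variable {Ω : Type u} [Finite Ω] {X : CoherentConfiguration Ω}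

lemma basis_sub_of_isRel {R s : Set (Ω × Ω)} (hR : X.IsRelation R) (hs : s ∈ X.S)
    {p : Ω × Ω} (hp : p ∈ s) (hpR : p ∈ R) : s ⊆ R := by
  obtain ⟨T, hT, hTe⟩ := hR
  rw [← hTe] at hpR ⊢
  obtain ⟨t, htT, hpt⟩ := hpR
  rw [X.basis_eq hs (hT htT) hp hpt]
  exact fun q hq => ⟨t, htT, hq⟩

variable {G : SimpleGraph Ω}

lemma adj_transfer (hGrel : X.IsRelation (adjRel G)) {x y a b : Ω} (hA : G.Adj x y)
    (hxa : XTwin X x a) (hyb : XTwin X y b) (hab : ¬ XTwin X a b) : G.Adj a b := by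
  have hxb : x ≠ b := by
    rintro rfl
    exact hab (xtwin_symm hxa)
  have hAxb : G.Adj x b := by
    rcases Classical.em (y = b) with rfl | hne
    · exact hA
    · exact (xtwin_isTwin hGrel hyb x (G.ne_of_adj hA) hxb).mp hA
  rcases Classical.em (x = a) with rfl | hne
  · exact hAxb
  · have hba : b ≠ a := by
      rintro rfl
      exact hab (xtwin_refl b)
    exact ((xtwin_isTwin hGrel hxa b (Ne.symm hxb) hba).mp hAxb.symm).symm

lemma twin_clique (hGrel : X.IsRelation (adjRel G)) {u v w : Ω} (huv : XTwin X u v)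
    (hne : u ≠ v) (huw : XTwin X u w) (hA : G.Adj u w) : G.Adj u v := by
  rcases Classical.em (v = w) with rfl | hvw
  · exact hA
  · have hwv : XTwin X w v := xtwin_trans (xtwin_symm huw) huv
    exact (xtwin_isTwin hGrel hwv u (G.ne_of_adj hA) hne).mp hA

variable (hnt : ¬ ∀ x y : Ω, XTwin X x y)
include hnt

lemma mem_fiber_of_qm {Δ : Set Ω} (hΔ : diagRel Δ ∈ X.S) {x : Ω}
    (hx : qm X x ∈ qm X '' Δ) : x ∈ Δ := by
  obtain ⟨w, hw, hqw⟩ := hx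
  exact xtwin_same_fiber hnt (qm_eq_iff.mp hqw) hΔ hw

end Final

section MainCase
open CoherentConfiguration Classical
variable {Ω : Type u} [Finite Ω] {G : SimpleGraph Ω} {π : Set (Set Ω)}
  {X : CoherentConfiguration Ω} {Y : CoherentConfiguration (Quot (XTwin X))}

/-- Every fiber of `Y` is contained in the image of a fiber of `X`. -/
lemma hfib_main (hcorrect : π = {Δ | X.IsFiber Δ})
    (hY : IsWLPart (quotGraph G (XTwin X)) ((fun Δ => Quot.mk (XTwin X) '' Δ) '' π) Y) :
    ∀ Φ : Set (Quot (XTwin X)), diagRel Φ ∈ Y.S →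
      ∃ Δ : Set Ω, diagRel Δ ∈ X.S ∧ Φ ⊆ qm X '' Δ := by
  intro Φ hΦ
  obtain ⟨⟨c, c'⟩, hc⟩ := Y.basis_nonempty hΦ
  have hcΦ : c ∈ Φ := hc.2
  obtain ⟨x, hx⟩ := Quot.exists_rep c
  obtain ⟨Δ, hΔ, hxΔ⟩ := X.exists_fiber x
  refine ⟨Δ, hΔ, ?_⟩
  have hrel : Y.IsRelation (diagRel (qm X '' Δ)) := by
    have hm : (fun Δ => Quot.mk (XTwin X) '' Δ) Δ ∈ ((fun Δ => Quot.mk (XTwin X) '' Δ) '' π) :=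
      Set.mem_image_of_mem _ (by rw [hcorrect]; exact hΔ)
    exact hY.2.1 _ hm
  obtain ⟨T, hT, hTe⟩ := hrel
  have hccT : (c, c) ∈ diagRel (qm X '' Δ) := ⟨rfl, by rw [← hx]; exact ⟨x, hxΔ, rfl⟩⟩
  rw [← hTe] at hccT
  obtain ⟨t, htT, hct⟩ := hccT
  have heq : diagRel Φ = t := Y.basis_eq hΦ (hT htT) ⟨rfl, hcΦ⟩ hct
  intro y hy
  have hyU : (y, y) ∈ ⋃₀ T := ⟨t, htT, heq ▸ (⟨rfl, hy⟩ : (y, y) ∈ diagRel Φ)⟩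
  rw [hTe] at hyU
  exact hyU.2

variable (hnt : ¬ ∀ x y : Ω, XTwin X x y)
  (hfib : ∀ Φ : Set (Quot (XTwin X)), diagRel Φ ∈ Y.S →
    ∃ Δ : Set Ω, diagRel Δ ∈ X.S ∧ Φ ⊆ qm X '' Δ)
include hnt

include hfib in
lemma ZisRel_adj (hWL : IsWLPart G π X)
    (hY : IsWLPart (quotGraph G (XTwin X)) ((fun Δ => Quot.mk (XTwin X) '' Δ) '' π) Y) :
    (ZCC X Y hfib).IsRelation (adjRel G) := by
  refine ⟨{z | z ∈ (ZCC X Y hfib).S ∧ z ⊆ adjRel G}, fun z hz => hz.1, ?_⟩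
  apply Set.Subset.antisymm
  · rintro p ⟨z, ⟨-, hsub⟩, hp⟩
    exact hsub hp
  · rintro ⟨x, y⟩ hxy
    obtain ⟨t, ht, hm⟩ := Y.exists_basis (qm X x, qm X y)
    have hne : x ≠ y := G.ne_of_adj hxy
    refine ⟨preQ X t ∩ {p : Ω × Ω | p.1 ≠ p.2},
      ⟨⟨⟨(x, y), hm, hne⟩, t, ht, Or.inr rfl⟩, ?_⟩, hm, hne⟩
    rcases Classical.em (qm X x = qm X y) with hq | hq
    · -- twin case : the class of x is a clique
      have htw : XTwin X x y := qm_eq_iff.mp hq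
      have hmm : (qm X x, qm X x) ∈ t := by
        have h := hm
        rw [← hq] at h
        exact h
      have hdg : ∀ pp ∈ t, pp.1 = pp.2 := Y.diag_of_mem_diag ht hmm
      have hΦ : diagRel {c | (c, c) ∈ t} ∈ Y.S := by
        rw [← Y.diag_basis_eq ht hmm]; exact ht
      obtain ⟨Δ', hΔ', hsub'⟩ := hfib _ hΦ
      have hxΔ : x ∈ Δ' := mem_fiber_of_qm hnt hΔ' (hsub' hmm)
      obtain ⟨s, hsX, hxys⟩ := X.exists_basis (x, y)
      have hsadj : s ⊆ adjRel G := basis_sub_of_isRel hWL.1 hsX hxys hxy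
      rintro ⟨u, v⟩ ⟨hut, huv⟩
      have hquv : qm X u = qm X v := hdg _ hut
      have htuv : XTwin X u v := qm_eq_iff.mp hquv
      have huut : (qm X u, qm X u) ∈ t := by
        have h : (qm X u, qm X v) ∈ t := hut
        rw [← hquv] at h
        exact h
      have huΔ : u ∈ Δ' := mem_fiber_of_qm hnt hΔ' (hsub' huut)
      obtain ⟨w, hw⟩ := (X.dom_fiber hsX hxys hΔ' hxΔ).2 u huΔ
      exact twin_clique hWL.1 htuv huv (xtwin_parabolic hsX hxys htw hw) (hsadj hw)
    · -- non-twin case : t is contained in the quotient arc set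
      obtain ⟨TY, hTY, hTYe⟩ := hY.1
      have hmadj : (qm X x, qm X y) ∈ adjRel (quotGraph G (XTwin X)) := by
        refine ⟨hq, ?_⟩
        intro a b ha hb
        refine adj_transfer hWL.1 hxy (qm_eq_iff.mp ha.symm) (qm_eq_iff.mp hb.symm) ?_
        intro htab
        apply hq
        have h := Quot.sound htab
        rw [ha, hb] at h
        exact h
      rw [← hTYe] at hmadj
      obtain ⟨t', ht'T, hmt'⟩ := hmadj
      have htt' : t = t' := Y.basis_eq ht (hTY ht'T) hm hmt'
      rintro ⟨u, v⟩ ⟨hut, -⟩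
      have huvadj : (qm X u, qm X v) ∈ adjRel (quotGraph G (XTwin X)) := by
        rw [← hTYe]
        exact ⟨t', ht'T, htt' ▸ hut⟩
      exact huvadj.2 u v rfl rfl

include hfib in
lemma ZisRel_fiber (hcorrect : π = {Δ | X.IsFiber Δ}) :
    ∀ Δ ∈ π, (ZCC X Y hfib).IsRelation (diagRel Δ) := by
  intro Δ hπ
  have hΔX : diagRel Δ ∈ X.S := by rw [hcorrect] at hπ; exact hπ
  refine ⟨{z | z ∈ (ZCC X Y hfib).S ∧ z ⊆ diagRel Δ}, fun z hz => hz.1, ?_⟩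
  apply Set.Subset.antisymm
  · rintro p ⟨z, ⟨-, hsub⟩, hp⟩
    exact hsub hp
  · rintro ⟨x, y⟩ ⟨h1, h2⟩
    have hxy : x = y := h1
    subst hxy
    obtain ⟨t, ht, hm⟩ := Y.exists_basis (qm X x, qm X x)
    refine ⟨preQ X t ∩ {p : Ω × Ω | p.1 = p.2},
      ⟨⟨⟨(x, x), hm, rfl⟩, t, ht, Or.inl rfl⟩, ?_⟩, hm, rfl⟩
    have hΦ : diagRel {c | (c, c) ∈ t} ∈ Y.S := by
      rw [← Y.diag_basis_eq ht hm]; exact ht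
    obtain ⟨Δ'', hΔ'', hsub''⟩ := hfib _ hΦ
    have hxΔ'' : x ∈ Δ'' := mem_fiber_of_qm hnt hΔ'' (hsub'' hm)
    have hΔeq : Δ'' = Δ := X.fiber_unique hΔ'' hΔX hxΔ'' h2
    rintro ⟨u, v⟩ ⟨hut, huv⟩
    have huveq : u = v := huv
    subst huveq
    have huΔ'' : u ∈ Δ'' := mem_fiber_of_qm hnt hΔ'' (hsub'' hut)
    exact ⟨rfl, hΔeq ▸ huΔ''⟩

include hfib in
/-- Every image of a basis relation of `X` is a relation of `Y`. -/
lemma img_isRel_Y (hWL : IsWLPart G π X) (hcorrect : π = {Δ | X.IsFiber Δ})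
    (hY : IsWLPart (quotGraph G (XTwin X)) ((fun Δ => Quot.mk (XTwin X) '' Δ) '' π) Y) :
    ∀ s ∈ X.S, Y.IsRelation (imgRel X s) := by
  have hXleZ : CCle X (ZCC X Y hfib) :=
    hWL.2.2 _ (ZisRel_adj hnt hfib hWL hY) (ZisRel_fiber hnt hfib hcorrect)
  intro s hs
  rcases Classical.em (∃ x : Ω, (x, x) ∈ s) with ⟨x, hx⟩ | hdiag
  · -- s is a diagonal basis relation
    have himg : imgRel X s = diagRel (qm X '' {y | (y, y) ∈ s}) := by
      conv_lhs => rw [X.diag_basis_eq hs hx]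
      exact imgRel_diagRel X _
    have hfib' : diagRel {y | (y, y) ∈ s} ∈ X.S := by
      rw [← X.diag_basis_eq hs hx]; exact hs
    rw [himg]
    exact hY.2.1 _ ⟨_, by rw [hcorrect]; exact hfib', rfl⟩
  · rcases Classical.em (∃ p ∈ s, XTwin X p.1 p.2) with ⟨⟨a, b⟩, hab, htw⟩ | hnotw
    · -- s consists of twin pairs
      obtain ⟨Δ, hΔ, haΔ⟩ := X.exists_fiber a
      rw [imgRel_e_fiber hnt hs hab htw hΔ haΔ]
      exact hY.2.1 _ ⟨Δ, by rw [hcorrect]; exact hΔ, rfl⟩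
    · -- the generic case, via the pullback configuration
      obtain ⟨Tz, hTz, hTze⟩ := hXleZ s ⟨{s}, by
        rintro z hz
        rw [Set.mem_singleton_iff] at hz
        rw [hz]; exact hs, Set.sUnion_singleton s⟩
      refine ⟨{t | t ∈ Y.S ∧ t ⊆ imgRel X s}, fun t htm => htm.1, ?_⟩
      apply Set.Subset.antisymm
      · rintro p ⟨t, ⟨-, hsub⟩, hp⟩
        exact hsub hp
      · rintro ⟨c, d⟩ hcd
        obtain ⟨⟨x, y⟩, hxys, heq⟩ := hcd
        have hxyU : (x, y) ∈ ⋃₀ Tz := by rw [hTze]; exact hxys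
        obtain ⟨z, hzT, hxyz⟩ := hxyU
        obtain ⟨hzne, t, ht, hform⟩ := hTz hzT
        have hzsub : z ⊆ s := by
          rw [← hTze]
          exact fun q hq => ⟨z, hzT, hq⟩
        rcases hform with rfl | rfl
        · -- impossible : z is diagonal but s is off-diagonal
          have hxyd : x = y := hxyz.2
          subst hxyd
          exact absurd ⟨x, hxys⟩ hdiag
        · refine ⟨t, ⟨ht, ?_⟩, heq ▸ hxyz.1⟩
          rintro ⟨c', d'⟩ hc'd'
          obtain ⟨u, hu⟩ := Quot.exists_rep c'
          obtain ⟨v, hv⟩ := Quot.exists_rep d'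
          have huvt : (qm X u, qm X v) ∈ t := by
            rw [show qm X u = c' from hu, show qm X v = d' from hv]
            exact hc'd'
          have huv : u ≠ v := by
            rintro rfl
            have hdg := Y.diag_of_mem_diag ht huvt (qm X x, qm X y) hxyz.1
            exact hnotw ⟨(x, y), hxys, qm_eq_iff.mp hdg⟩
          rw [← hu, ← hv]
          exact ⟨(u, v), hzsub ⟨huvt, huv⟩, rfl⟩

include hfib in
/-- Main case : the basis relations of `Y` are exactly the images of those of `X`. -/
lemma main_YS_eq (hWL : IsWLPart G π X) (hcorrect : π = {Δ | X.IsFiber Δ})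
    (hY : IsWLPart (quotGraph G (XTwin X)) ((fun Δ => Quot.mk (XTwin X) '' Δ) '' π) Y) :
    Y.S = (fun s => imgRel X s) '' X.S := by
  have himgY := img_isRel_Y hnt hfib hWL hcorrect hY
  have hYleQ : CCle Y (quotCC X hnt) := by
    refine hY.2.2 _ (quotCC_isRel_adj hnt hWL.1) ?_
    rintro Δb ⟨Δ, hπ, rfl⟩
    exact quotCC_isRel_fiber hnt (by rw [hcorrect] at hπ; exact hπ)
  ext b
  constructor
  · intro hb
    obtain ⟨p, hp⟩ := Y.basis_nonempty hb
    obtain ⟨Tq, hTq, hTqe⟩ := hYleQ b ⟨{b}, by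
      rintro z hz
      rw [Set.mem_singleton_iff] at hz
      rw [hz]; exact hb, Set.sUnion_singleton b⟩
    have hpU : p ∈ ⋃₀ Tq := by rw [hTqe]; exact hp
    obtain ⟨bq, hbqT, hpbq⟩ := hpU
    obtain ⟨s, hsX, rfl⟩ := hTq hbqT
    have hbqsub : imgRel X s ⊆ b := by
      rw [← hTqe]
      exact fun q hq => ⟨_, hbqT, hq⟩
    obtain ⟨TY, hTY, hTYe⟩ := himgY s hsX
    have hpY : p ∈ ⋃₀ TY := by rw [hTYe]; exact hpbq
    obtain ⟨t', ht'T, hpt'⟩ := hpY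
    have ht'b : t' = b := Y.basis_eq (hTY ht'T) hb hpt' hp
    have hbsub : b ⊆ imgRel X s := by
      rw [← ht'b, ← hTYe]
      exact fun q hq => ⟨t', ht'T, hq⟩
    exact ⟨s, hsX, Set.Subset.antisymm hbqsub hbsub⟩
  · rintro ⟨s, hsX, rfl⟩
    obtain ⟨TY, hTY, hTYe⟩ := himgY s hsX
    obtain ⟨q0, hq0⟩ := X.basis_nonempty hsX
    have hp : Prod.map (qm X) (qm X) q0 ∈ imgRel X s := Set.mem_image_of_mem _ hq0
    have hpY : Prod.map (qm X) (qm X) q0 ∈ ⋃₀ TY := by rw [hTYe]; exact hp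
    obtain ⟨t, htT, hpt⟩ := hpY
    have htsub : t ⊆ imgRel X s := by
      rw [← hTYe]
      exact fun q hq => ⟨t, htT, hq⟩
    obtain ⟨Tq, hTq, hTqe⟩ := hYleQ t ⟨{t}, by
      rintro z hz
      rw [Set.mem_singleton_iff] at hz
      rw [hz]; exact hTY htT, Set.sUnion_singleton t⟩
    have hpU : Prod.map (qm X) (qm X) q0 ∈ ⋃₀ Tq := by rw [hTqe]; exact hpt
    obtain ⟨bq, hbqT, hpbq⟩ := hpU
    obtain ⟨s', hs'X, rfl⟩ := hTq hbqT
    have heq2 : imgRel X s' = imgRel X s := imgRel_eq_of_inter hnt hs'X hsX ⟨_, hpbq, hp⟩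
    have hsub2 : imgRel X s ⊆ t := by
      rw [← heq2, ← hTqe]
      exact fun q hq => ⟨_, hbqT, hq⟩
    have : imgRel X s = t := Set.Subset.antisymm hsub2 htsub
    rw [show (fun s => imgRel X s) s = imgRel X s from rfl, this]
    exact hTY htT

end MainCase

lemma diagRel_inj {κ : Type v} {A B : Set κ} (h : diagRel A = diagRel B) : A = B := by
  ext c
  constructor
  · intro hc
    have h2 : (c, c) ∈ diagRel B := h ▸ (⟨rfl, hc⟩ : (c, c) ∈ diagRel A)
    exact h2.2
  · intro hc
    have h2 : (c, c) ∈ diagRel A := h.symm ▸ (⟨rfl, hc⟩ : (c, c) ∈ diagRel B)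
    exact h2.2

/-- Reducing twins: for a correct partition `π` of `G` and
`X = WL(G)_π` with twin parabolic `e = e_X`: `e` is a twin equivalence of `G`,
`WL(G)_π / e = WL(G/e)_{π/e}`, and `π/e` is a correct partition of `G/e`. -/
theorem stmt_14 {Ω : Type u} [Fintype Ω] (G : SimpleGraph Ω)
    (π : Set (Set Ω)) (X : CoherentConfiguration Ω)
    (hWL : IsWLPart G π X) (hcorrect : π = {Δ | X.IsFiber Δ})
    (Y : CoherentConfiguration (Quot (XTwin X)))
    (hY : IsWLPart (quotGraph G (XTwin X))
      ((fun Δ => Quot.mk (XTwin X) '' Δ) '' π) Y) :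
    (IsEquivSet (twinRel X) ∧ ∀ a b : Ω, XTwin X a b → IsTwin G a b) ∧
      Y.S = (fun s => Prod.map (Quot.mk (XTwin X)) (Quot.mk (XTwin X)) '' s) '' X.S ∧
      (fun Δ => Quot.mk (XTwin X) '' Δ) '' π = {Δ | Y.IsFiber Δ} := by
  classical
  have hA : IsEquivSet (twinRel X) ∧ ∀ a b : Ω, XTwin X a b → IsTwin G a b := by
    constructor
    · exact ⟨fun a => xtwin_refl a, fun a b h => xtwin_symm h,
        fun a b c h1 h2 => xtwin_trans h1 h2⟩
    · exact fun a b h => xtwin_isTwin hWL.1 h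
  by_cases htot : ∀ x y : Ω, XTwin X x y
  · -- degenerate case : the quotient is a single point (or empty)
    rcases isEmpty_or_nonempty Ω with hE | hNE
    · have hXS : X.S = ∅ := by
        ext s
        simp only [Set.mem_empty_iff_false, iff_false]
        intro hs
        obtain ⟨⟨p1, p2⟩, -⟩ := X.basis_nonempty hs
        exact IsEmpty.false p1
      have hYS : Y.S = ∅ := by
        ext t
        simp only [Set.mem_empty_iff_false, iff_false]
        intro ht
        obtain ⟨⟨c, d⟩, -⟩ := Y.basis_nonempty ht
        obtain ⟨x, -⟩ := Quot.exists_rep c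
        exact IsEmpty.false x
      refine ⟨hA, ?_, ?_⟩
      · rw [hYS, hXS, Set.image_empty]
      · rw [hcorrect]
        ext Φ
        constructor
        · rintro ⟨Δ, hΔ, rfl⟩
          rw [Set.mem_setOf_eq, CoherentConfiguration.IsFiber] at hΔ
          rw [hXS] at hΔ
          exact absurd hΔ (Set.notMem_empty _)
        · intro hΦ
          rw [Set.mem_setOf_eq, CoherentConfiguration.IsFiber, hYS] at hΦ
          exact absurd hΦ (Set.notMem_empty _)
    · obtain ⟨x₀⟩ := hNE
      have hone : ∀ c : Quot (XTwin X), c = Quot.mk (XTwin X) x₀ := by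
        intro c
        obtain ⟨x, hx⟩ := Quot.exists_rep c
        rw [← hx]
        exact Quot.sound (htot x x₀)
      have hpair : ∀ p : Quot (XTwin X) × Quot (XTwin X),
          p = (Quot.mk (XTwin X) x₀, Quot.mk (XTwin X) x₀) := by
        rintro ⟨c, d⟩
        rw [hone c, hone d]
      have hsetuniv : ∀ t : Set (Quot (XTwin X) × Quot (XTwin X)), t.Nonempty →
          t = Set.univ := by
        rintro t ⟨p, hp⟩
        ext q
        simp only [Set.mem_univ, iff_true]
        rw [hpair q, ← hpair p]
        exact hp
      have hYuniv : ∀ t ∈ Y.S, t = Set.univ := fun t ht => hsetuniv t (Y.basis_nonempty ht)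
      have hYm : Set.univ ∈ Y.S := by
        obtain ⟨t, ht, -⟩ := Y.exists_basis (Quot.mk (XTwin X) x₀, Quot.mk (XTwin X) x₀)
        rw [← hYuniv t ht]
        exact ht
      have hYS : Y.S = {Set.univ} := by
        ext t
        rw [Set.mem_singleton_iff]
        exact ⟨fun ht => hYuniv t ht, fun ht => ht ▸ hYm⟩
      have himg : ∀ s ∈ X.S,
          Prod.map (Quot.mk (XTwin X)) (Quot.mk (XTwin X)) '' s = Set.univ := by
        intro s hs
        obtain ⟨p, hp⟩ := X.basis_nonempty hs
        exact hsetuniv _ ⟨_, Set.mem_image_of_mem _ hp⟩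
      obtain ⟨s₀, hs₀, -⟩ := X.exists_basis (x₀, x₀)
      obtain ⟨Δ₀, hΔ₀, hx₀Δ⟩ := X.exists_fiber x₀
      refine ⟨hA, ?_, ?_⟩
      · rw [hYS]
        ext b
        rw [Set.mem_singleton_iff]
        constructor
        · rintro rfl
          exact ⟨s₀, hs₀, himg s₀ hs₀⟩
        · rintro ⟨s, hs, rfl⟩
          exact himg s hs
      · have claim : ∀ Φ : Set (Quot (XTwin X)), diagRel Φ = Set.univ ↔
            Quot.mk (XTwin X) x₀ ∈ Φ := by
          intro Φ
          constructor
          · intro h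
            have h2 : (Quot.mk (XTwin X) x₀, Quot.mk (XTwin X) x₀) ∈ diagRel Φ := by
              rw [h]; trivial
            exact h2.2
          · intro hm
            ext q
            simp only [Set.mem_univ, iff_true]
            rw [hpair q]
            exact ⟨rfl, hm⟩
        ext Φ
        constructor
        · rintro ⟨Δ, hπ, rfl⟩
          show diagRel (Quot.mk (XTwin X) '' Δ) ∈ Y.S
          rw [hcorrect] at hπ
          obtain ⟨⟨y, y'⟩, hy⟩ := X.basis_nonempty hπ
          have hyΔ : y ∈ Δ := hy.2
          rw [hYS, Set.mem_singleton_iff, claim]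
          exact ⟨y, hyΔ, (hone (Quot.mk (XTwin X) y)).symm ▸ rfl⟩
        · intro hΦ
          have hΦ' : diagRel Φ ∈ Y.S := hΦ
          rw [hYS, Set.mem_singleton_iff, claim] at hΦ'
          refine ⟨Δ₀, by rw [hcorrect]; exact hΔ₀, ?_⟩
          ext c
          constructor
          · rintro ⟨w, -, rfl⟩
            rw [hone (Quot.mk (XTwin X) w)]
            exact hΦ'
          · intro hc
            rw [hone c]
            exact ⟨x₀, hx₀Δ, rfl⟩
  · -- main case
    have hnt : ¬ ∀ x y : Ω, XTwin X x y := htot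
    have hfib := hfib_main hcorrect hY
    have hYS : Y.S = (fun s => imgRel X s) '' X.S := main_YS_eq hnt hfib hWL hcorrect hY
    refine ⟨hA, hYS, ?_⟩
    ext Φ
    constructor
    · rintro ⟨Δ, hπ, rfl⟩
      show diagRel (Quot.mk (XTwin X) '' Δ) ∈ Y.S
      rw [hYS]
      rw [hcorrect] at hπ
      exact ⟨diagRel Δ, hπ, imgRel_diagRel X Δ⟩
    · intro hΦ
      have hΦ' : diagRel Φ ∈ Y.S := hΦ
      rw [hYS] at hΦ'
      obtain ⟨s, hsX, hseq0⟩ := hΦ'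
      have hseq : imgRel X s = diagRel Φ := hseq0
      obtain ⟨⟨x, y⟩, hxys⟩ := X.basis_nonempty hsX
      have hmem : (qm X x, qm X y) ∈ diagRel Φ := by
        rw [← hseq]
        exact ⟨(x, y), hxys, rfl⟩
      have htw : XTwin X x y := qm_eq_iff.mp hmem.1
      obtain ⟨Δ, hΔ, hxΔ⟩ := X.exists_fiber x
      have himg2 : imgRel X s = diagRel (qm X '' Δ) := imgRel_e_fiber hnt hsX hxys htw hΔ hxΔ
      have hΦeq : qm X '' Δ = Φ := diagRel_inj (by rw [← himg2, hseq])
      exact ⟨Δ, by rw [hcorrect]; exact hΔ, hΦeq⟩
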